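/- arXiv:1807.05135 — 9 statements merged into one kernel-verified Lean document; each statement's English description precedes it below -/
import Mathlib

section
/- If random variables A and B are conditionally independent given R, then for any event W with positive probability, the conditional mutual information I(A; B | R, W) is at most log(1/Pr(W)). -/
open Finset
open scoped Classical

noncomputable def pr {Ω : Type*} [Fintype Ω] (p : Ω → ℝ) (E : Ω → Prop) : ℝ :=
  ∑ ω ∈ Finset.univ.filter (fun ω => E ω), p ω

noncomputable def condMutualInfo {Ω α β ρ : Type*} [Fintype Ω] [Fintype α] [Fintype β]
    [Fintype ρ] (p : Ω → ℝ) (A : Ω → α) (B : Ω → β) (R : Ω → ρ) : ℝ :=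
  ∑ a : α, ∑ b : β, ∑ r : ρ,
    pr p (fun ω => A ω = a ∧ B ω = b ∧ R ω = r) *
      Real.logb 2
        ((pr p (fun ω => A ω = a ∧ B ω = b ∧ R ω = r) * pr p (fun ω => R ω = r)) /
          (pr p (fun ω => A ω = a ∧ R ω = r) * pr p (fun ω => B ω = b ∧ R ω = r)))

lemma log_ge (x : ℝ) (hx : 0 < x) : 1 - x⁻¹ ≤ Real.log x := by
  have h := Real.log_le_sub_one_of_pos (inv_pos.mpr hx)
  rw [Real.log_inv] at h
  linarith

lemma log_sum_ineq {ι : Type*} (s : Finset ι) (a b : ι → ℝ)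
    (ha : ∀ i ∈ s, 0 ≤ a i) (hb : ∀ i ∈ s, 0 ≤ b i)
    (hab : ∀ i ∈ s, b i = 0 → a i = 0) :
    (∑ i ∈ s, a i) * Real.log ((∑ i ∈ s, a i) / (∑ i ∈ s, b i)) ≤
      ∑ i ∈ s, a i * Real.log (a i / b i) := by
  by_cases hB0 : ∑ i ∈ s, b i = 0
  · have hb0 : ∀ i ∈ s, b i = 0 := (Finset.sum_eq_zero_iff_of_nonneg hb).mp hB0
    have ha0 : ∀ i ∈ s, a i = 0 := fun i hi => hab i hi (hb0 i hi)
    rw [Finset.sum_eq_zero ha0]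
    simp [Finset.sum_eq_zero (fun i hi => by rw [ha0 i hi]; ring : ∀ i ∈ s, a i * Real.log (a i / b i) = 0)]
  by_cases hA0 : ∑ i ∈ s, a i = 0
  · have ha0 : ∀ i ∈ s, a i = 0 := (Finset.sum_eq_zero_iff_of_nonneg ha).mp hA0
    rw [hA0]
    simp [Finset.sum_eq_zero (fun i hi => by rw [ha0 i hi]; ring : ∀ i ∈ s, a i * Real.log (a i / b i) = 0)]
  have hApos : 0 < ∑ i ∈ s, a i := lt_of_le_of_ne (Finset.sum_nonneg ha) (Ne.symm hA0)
  have hBpos : 0 < ∑ i ∈ s, b i := lt_of_le_of_ne (Finset.sum_nonneg hb) (Ne.symm hB0)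
  set A := ∑ i ∈ s, a i with hA
  set B := ∑ i ∈ s, b i with hB
  have key : ∀ i ∈ s, a i * Real.log (A / B) + a i - b i * (A / B) ≤ a i * Real.log (a i / b i) := by
    intro i hi
    rcases eq_or_lt_of_le (hb i hi) with hbi | hbi
    · have hai : a i = 0 := hab i hi hbi.symm
      rw [hai, ← hbi]; simp
    rcases eq_or_lt_of_le (ha i hi) with hai | hai
    · rw [← hai]
      have : 0 < b i * (A / B) := by positivity
      simp; positivity
    have hx : 0 < a i * B / (b i * A) := by positivity
    have hlog := log_ge _ hx
    have hsplit : Real.log (a i / b i) = Real.log (A / B) + Real.log (a i * B / (b i * A)) := by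
      rw [← Real.log_mul (by positivity) (by positivity)]
      congr 1
      field_simp
    rw [hsplit, mul_add]
    have hinv : (a i * B / (b i * A))⁻¹ = b i * A / (a i * B) := by
      rw [inv_div]
    have h2 : a i * (1 - (a i * B / (b i * A))⁻¹) = a i - b i * (A / B) := by
      rw [hinv]; field_simp
    nlinarith [mul_le_mul_of_nonneg_left hlog (le_of_lt hai)]
  calc A * Real.log (A / B) = ∑ i ∈ s, (a i * Real.log (A / B) + a i - b i * (A / B)) := by
        rw [Finset.sum_sub_distrib, Finset.sum_add_distrib, ← Finset.sum_mul, ← Finset.sum_mul,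
          ← hA, ← hB]
        field_simp
        ring
    _ ≤ ∑ i ∈ s, a i * Real.log (a i / b i) := Finset.sum_le_sum key

lemma gibbs {ι : Type*} (s : Finset ι) (a b : ι → ℝ)
    (ha : ∀ i ∈ s, 0 ≤ a i) (hb : ∀ i ∈ s, 0 ≤ b i)
    (hab : ∀ i ∈ s, b i = 0 → a i = 0) (h : ∑ i ∈ s, a i = ∑ i ∈ s, b i) :
    0 ≤ ∑ i ∈ s, a i * Real.log (a i / b i) := by
  have H := log_sum_ineq s a b ha hb hab
  rcases eq_or_ne (∑ i ∈ s, b i) 0 with h0 | h0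
  · rw [h, h0] at H; simpa using H
  · rw [h, div_self h0, Real.log_one, mul_zero] at H; exact H

section prlemmas
variable {Ω : Type*} [Fintype Ω] (p : Ω → ℝ)

lemma pr_eq_sum_ite (E : Ω → Prop) : pr p E = ∑ ω, if E ω then p ω else 0 := by
  rw [pr, Finset.sum_filter]

lemma pr_nonneg (hp0 : ∀ ω, 0 ≤ p ω) (E : Ω → Prop) : 0 ≤ pr p E :=
  Finset.sum_nonneg fun ω _ => hp0 ω

lemma pr_congr {E F : Ω → Prop} (h : ∀ ω, E ω ↔ F ω) : pr p E = pr p F := by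
  rw [pr_eq_sum_ite, pr_eq_sum_ite]
  exact Finset.sum_congr rfl fun ω _ => by rw [iff_iff_eq.mp (h ω)]

lemma pr_mono (hp0 : ∀ ω, 0 ≤ p ω) {E F : Ω → Prop} (h : ∀ ω, E ω → F ω) :
    pr p E ≤ pr p F := by
  rw [pr_eq_sum_ite, pr_eq_sum_ite]
  apply Finset.sum_le_sum
  intro ω _
  by_cases hE : E ω
  · simp [hE, h ω hE]
  · simp [hE]; by_cases hF : F ω <;> simp [hF, hp0 ω]

lemma pr_true (hp1 : ∑ ω, p ω = 1) : pr p (fun _ => True) = 1 := by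
  rw [pr_eq_sum_ite]; simpa using hp1

lemma sum_pr_fiber {γ : Type*} [Fintype γ] (C : Ω → γ) (E : Ω → Prop) :
    ∑ c : γ, pr p (fun ω => C ω = c ∧ E ω) = pr p E := by
  simp only [pr_eq_sum_ite]
  rw [Finset.sum_comm]
  apply Finset.sum_congr rfl
  intro ω _
  by_cases hE : E ω
  · simp [hE]
  · simp [hE]

end prlemmas
lemma pr_cond {Ω : Type*} [Fintype Ω] (p : Ω → ℝ) (W : Set Ω) (E : Ω → Prop) :
    pr (fun ω => if ω ∈ W then p ω / pr p (fun ω' => ω' ∈ W) else 0) E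
      = pr p (fun ω => E ω ∧ ω ∈ W) / pr p (fun ω => ω ∈ W) := by
  simp only [pr_eq_sum_ite, Finset.sum_div]
  apply Finset.sum_congr rfl
  intro ω _
  by_cases hE : E ω <;> by_cases hWω : ω ∈ W <;> simp [hE, hWω]

/-- If `A` and `B` are conditionally independent given `R`, then for any event `W` with
positive probability, `I(A ; B | R, W) ≤ log(1 / Pr(W))`, where the mutual information is
computed under the measure conditioned on `W`. -/
theorem condMutualInfo_cond_event_le {Ω α β ρ : Type*} [Fintype Ω] [Fintype α] [Fintype β]
    [Fintype ρ] (p : Ω → ℝ) (hp0 : ∀ ω, 0 ≤ p ω) (hp1 : ∑ ω, p ω = 1)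
    (A : Ω → α) (B : Ω → β) (R : Ω → ρ) (W : Set Ω)
    (hW : 0 < pr p (fun ω => ω ∈ W))
    (hindep : ∀ (a : α) (b : β) (r : ρ),
      pr p (fun ω => A ω = a ∧ B ω = b ∧ R ω = r) * pr p (fun ω => R ω = r) =
        pr p (fun ω => A ω = a ∧ R ω = r) * pr p (fun ω => B ω = b ∧ R ω = r)) :
    condMutualInfo (fun ω => if ω ∈ W then p ω / pr p (fun ω' => ω' ∈ W) else 0) A B R ≤
      Real.logb 2 (1 / pr p (fun ω => ω ∈ W)) := by
  have hcond := pr_cond p W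
  set pW := pr p (fun ω => ω ∈ W) with hpWdef
  set q : Ω → ℝ := fun ω => if ω ∈ W then p ω / pW else 0 with hqdef
  have hq0 : ∀ ω, 0 ≤ q ω := by
    intro ω; rw [hqdef]; dsimp only
    split
    · exact div_nonneg (hp0 ω) hW.le
    · exact le_refl _
  -- basic facts about pr q
  have hqle : ∀ E : Ω → Prop, pr q E ≤ pr p E / pW := by
    intro E
    rw [hcond E]
    apply div_le_div_of_nonneg_right ?_ hW.le
    exact pr_mono p hp0 (fun ω h => h.1)
  have hqp : ∀ E : Ω → Prop, pr q E = 0 → pr p E = 0 → True := fun _ _ _ => trivial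
  have hppos : ∀ E : Ω → Prop, 0 < pr q E → 0 < pr p E := by
    intro E hq
    have h1 := hqle E
    have h2 : 0 < pr p E / pW := lt_of_lt_of_le hq h1
    by_contra hc
    push_neg at hc
    have : pr p E / pW ≤ 0 := div_nonpos_of_nonpos_of_nonneg hc hW.le
    linarith
  have hq1 : pr q (fun _ => True) = 1 := by
    rw [hcond]
    rw [pr_congr p (show ∀ ω, (True ∧ ω ∈ W) ↔ ω ∈ W by simp)]
    exact div_self hW.ne'
  have hqzero : ∀ E : Ω → Prop, pr p E = 0 → pr q E = 0 := by
    intro E hE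
    have := hqle E
    rw [hE, zero_div] at this
    exact le_antisymm this (pr_nonneg q hq0 E)
  -- marginalization lemmas
  have hmargB : ∀ (a : α) (r : ρ), ∑ b, pr q (fun ω => A ω = a ∧ B ω = b ∧ R ω = r)
      = pr q (fun ω => A ω = a ∧ R ω = r) := by
    intro a r
    rw [← sum_pr_fiber q B (fun ω => A ω = a ∧ R ω = r)]
    exact Finset.sum_congr rfl fun b _ => pr_congr q (by tauto)
  have hmargA : ∀ (b : β) (r : ρ), ∑ a, pr q (fun ω => A ω = a ∧ B ω = b ∧ R ω = r)
      = pr q (fun ω => B ω = b ∧ R ω = r) := fun b r =>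
    sum_pr_fiber q A (fun ω => B ω = b ∧ R ω = r)
  have hmargAR : ∀ r : ρ, ∑ a, pr q (fun ω => A ω = a ∧ R ω = r) = pr q (fun ω => R ω = r) :=
    fun r => sum_pr_fiber q A (fun ω => R ω = r)
  have hmargBR : ∀ r : ρ, ∑ b, pr q (fun ω => B ω = b ∧ R ω = r) = pr q (fun ω => R ω = r) :=
    fun r => sum_pr_fiber q B (fun ω => R ω = r)
  have hmargARp : ∀ r : ρ, ∑ a, pr p (fun ω => A ω = a ∧ R ω = r) = pr p (fun ω => R ω = r) :=
    fun r => sum_pr_fiber p A (fun ω => R ω = r)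
  have hmargBRp : ∀ r : ρ, ∑ b, pr p (fun ω => B ω = b ∧ R ω = r) = pr p (fun ω => R ω = r) :=
    fun r => sum_pr_fiber p B (fun ω => R ω = r)
  have hsumR : ∑ r, pr q (fun ω => R ω = r) = 1 := by
    rw [← hq1, ← sum_pr_fiber q R (fun _ => True)]
    exact Finset.sum_congr rfl fun r _ => pr_congr q (by tauto)
  have hsumRp : ∑ r, pr p (fun ω => R ω = r) = 1 := by
    rw [← pr_true p hp1, ← sum_pr_fiber p R (fun _ => True)]
    exact Finset.sum_congr rfl fun r _ => pr_congr p (by tauto)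
  -- nonnegativity of the three relative-entropy pieces
  have hVge : 0 ≤ ∑ r, pr q (fun ω => R ω = r) *
      Real.log (pr q (fun ω => R ω = r) / pr p (fun ω => R ω = r)) := by
    apply gibbs Finset.univ _ _ (fun r _ => pr_nonneg q hq0 _) (fun r _ => pr_nonneg p hp0 _)
      (fun r _ h => hqzero _ h) (hsumR.trans hsumRp.symm)
  have hT1ge : 0 ≤ ∑ a, ∑ r, pr q (fun ω => A ω = a ∧ R ω = r) *
      Real.log (pr q (fun ω => A ω = a ∧ R ω = r) /
        (pr p (fun ω => A ω = a ∧ R ω = r) * pr q (fun ω => R ω = r) /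
          pr p (fun ω => R ω = r))) := by
    have H := gibbs (Finset.univ : Finset (α × ρ))
      (fun x => pr q (fun ω => A ω = x.1 ∧ R ω = x.2))
      (fun x => pr p (fun ω => A ω = x.1 ∧ R ω = x.2) * pr q (fun ω => R ω = x.2) /
        pr p (fun ω => R ω = x.2))
      (fun x _ => pr_nonneg q hq0 _)
      (fun x _ => div_nonneg (mul_nonneg (pr_nonneg p hp0 _) (pr_nonneg q hq0 _))
        (pr_nonneg p hp0 _))
      ?hab ?hsum
    · rw [Fintype.sum_prod_type] at H
      exact H
    case hab =>
      intro x _ h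
      rcases div_eq_zero_iff.mp h with h1 | h1
      · rcases mul_eq_zero.mp h1 with h2 | h2
        · exact hqzero _ h2
        · exact le_antisymm ((h2 ▸ pr_mono q hq0 (fun ω hω => hω.2) :
            pr q (fun ω => A ω = x.1 ∧ R ω = x.2) ≤ 0)) (pr_nonneg q hq0 _)
      · have hp' : pr p (fun ω => A ω = x.1 ∧ R ω = x.2) = 0 :=
          le_antisymm (h1 ▸ pr_mono p hp0 (fun ω hω => hω.2)) (pr_nonneg p hp0 _)
        exact hqzero _ hp'
    case hsum =>
      rw [Fintype.sum_prod_type, Fintype.sum_prod_type]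
      have lhs : ∀ a : α, ∑ r, pr q (fun ω => A ω = a ∧ R ω = r) = ∑ r, pr q (fun ω => A ω = a ∧ R ω = r) := fun _ => rfl
      calc ∑ a, ∑ r, pr q (fun ω => A ω = a ∧ R ω = r)
          = ∑ r, pr q (fun ω => R ω = r) := by
            rw [Finset.sum_comm]
            exact Finset.sum_congr rfl fun r _ => hmargAR r
        _ = ∑ a, ∑ r, pr p (fun ω => A ω = a ∧ R ω = r) * pr q (fun ω => R ω = r) /
              pr p (fun ω => R ω = r) := by
            rw [Finset.sum_comm]
            apply Finset.sum_congr rfl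
            intro r _
            simp only [mul_div_assoc, ← Finset.sum_mul, hmargARp r]
            rcases eq_or_ne (pr p (fun ω => R ω = r)) 0 with h0 | h0
            · rw [h0, hqzero _ h0]
              simp
            · field_simp
  have hT2ge : 0 ≤ ∑ b, ∑ r, pr q (fun ω => B ω = b ∧ R ω = r) *
      Real.log (pr q (fun ω => B ω = b ∧ R ω = r) /
        (pr p (fun ω => B ω = b ∧ R ω = r) * pr q (fun ω => R ω = r) /
          pr p (fun ω => R ω = r))) := by
    have H := gibbs (Finset.univ : Finset (β × ρ))
      (fun x => pr q (fun ω => B ω = x.1 ∧ R ω = x.2))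
      (fun x => pr p (fun ω => B ω = x.1 ∧ R ω = x.2) * pr q (fun ω => R ω = x.2) /
        pr p (fun ω => R ω = x.2))
      (fun x _ => pr_nonneg q hq0 _)
      (fun x _ => div_nonneg (mul_nonneg (pr_nonneg p hp0 _) (pr_nonneg q hq0 _))
        (pr_nonneg p hp0 _))
      ?hab ?hsum
    · rw [Fintype.sum_prod_type] at H
      exact H
    case hab =>
      intro x _ h
      rcases div_eq_zero_iff.mp h with h1 | h1
      · rcases mul_eq_zero.mp h1 with h2 | h2
        · exact hqzero _ h2
        · exact le_antisymm ((h2 ▸ pr_mono q hq0 (fun ω hω => hω.2) :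
            pr q (fun ω => B ω = x.1 ∧ R ω = x.2) ≤ 0)) (pr_nonneg q hq0 _)
      · have hp' : pr p (fun ω => B ω = x.1 ∧ R ω = x.2) = 0 :=
          le_antisymm (h1 ▸ pr_mono p hp0 (fun ω hω => hω.2)) (pr_nonneg p hp0 _)
        exact hqzero _ hp'
    case hsum =>
      rw [Fintype.sum_prod_type, Fintype.sum_prod_type]
      calc ∑ b, ∑ r, pr q (fun ω => B ω = b ∧ R ω = r)
          = ∑ r, pr q (fun ω => R ω = r) := by
            rw [Finset.sum_comm]
            exact Finset.sum_congr rfl fun r _ => hmargBR r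
        _ = ∑ b, ∑ r, pr p (fun ω => B ω = b ∧ R ω = r) * pr q (fun ω => R ω = r) /
              pr p (fun ω => R ω = r) := by
            rw [Finset.sum_comm]
            apply Finset.sum_congr rfl
            intro r _
            simp only [mul_div_assoc, ← Finset.sum_mul, hmargBRp r]
            rcases eq_or_ne (pr p (fun ω => R ω = r)) 0 with h0 | h0
            · rw [h0, hqzero _ h0]
              simp
            · field_simp
  -- the main KL bound
  have hqptw : ∀ ω : Ω, p ω = 0 → q ω = 0 := by
    intro ω h
    rw [hqdef]; dsimp only
    rw [h]
    simp
  have hU : ∑ a, ∑ b, ∑ r, pr q (fun ω => A ω = a ∧ B ω = b ∧ R ω = r) *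
      Real.log (pr q (fun ω => A ω = a ∧ B ω = b ∧ R ω = r) /
        pr p (fun ω => A ω = a ∧ B ω = b ∧ R ω = r)) ≤ Real.log (1 / pW) := by
    have step1 : ∀ (a : α) (b : β) (r : ρ),
        pr q (fun ω => A ω = a ∧ B ω = b ∧ R ω = r) *
          Real.log (pr q (fun ω => A ω = a ∧ B ω = b ∧ R ω = r) /
            pr p (fun ω => A ω = a ∧ B ω = b ∧ R ω = r)) ≤
        ∑ ω ∈ Finset.univ.filter (fun ω => A ω = a ∧ B ω = b ∧ R ω = r),
          q ω * Real.log (q ω / p ω) := by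
      intro a b r
      have H := log_sum_ineq (Finset.univ.filter (fun ω => A ω = a ∧ B ω = b ∧ R ω = r)) q p
        (fun ω _ => hq0 ω) (fun ω _ => hp0 ω) (fun ω _ h => hqptw ω h)
      simp only [pr]
      convert H using 2 <;> congr!
    calc ∑ a, ∑ b, ∑ r, pr q (fun ω => A ω = a ∧ B ω = b ∧ R ω = r) *
          Real.log (pr q (fun ω => A ω = a ∧ B ω = b ∧ R ω = r) /
            pr p (fun ω => A ω = a ∧ B ω = b ∧ R ω = r))
        ≤ ∑ a, ∑ b, ∑ r, ∑ ω ∈ Finset.univ.filter (fun ω => A ω = a ∧ B ω = b ∧ R ω = r),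
            q ω * Real.log (q ω / p ω) := by
          apply Finset.sum_le_sum; intro a _
          apply Finset.sum_le_sum; intro b _
          apply Finset.sum_le_sum; intro r _
          exact step1 a b r
      _ = ∑ ω, q ω * Real.log (q ω / p ω) := by
          rw [← Finset.sum_fiberwise Finset.univ (fun ω => (A ω, B ω, R ω))
            (fun ω => q ω * Real.log (q ω / p ω)), Fintype.sum_prod_type]
          apply Finset.sum_congr rfl; intro a _
          rw [Fintype.sum_prod_type]
          apply Finset.sum_congr rfl; intro b _
          apply Finset.sum_congr rfl; intro r _
          apply Finset.sum_congr ?_ (fun _ _ => rfl)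
          ext ω
          simp [Prod.ext_iff]
      _ = ∑ ω, q ω * Real.log (1 / pW) := by
          apply Finset.sum_congr rfl
          intro ω _
          rcases eq_or_ne (q ω) 0 with h0 | h0
          · rw [h0, zero_mul, zero_mul]
          · have hWω : ω ∈ W := by
              by_contra hc
              apply h0
              rw [hqdef]; dsimp only; rw [if_neg hc]
            have hpω : p ω ≠ 0 := by
              intro hc
              exact h0 (hqptw ω hc)
            congr 1
            rw [hqdef]; dsimp only; rw [if_pos hWω]
            rw [div_right_comm, div_self hpω]
      _ = Real.log (1 / pW) := by
          rw [← Finset.sum_mul]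
          have : ∑ ω, q ω = 1 := by
            have h := hq1
            rw [pr_eq_sum_ite] at h
            simpa using h
          rw [this, one_mul]
  -- termwise decomposition of the mutual information
  have hterm : ∀ (a : α) (b : β) (r : ρ),
      pr q (fun ω => A ω = a ∧ B ω = b ∧ R ω = r) *
        Real.log ((pr q (fun ω => A ω = a ∧ B ω = b ∧ R ω = r) * pr q (fun ω => R ω = r)) /
          (pr q (fun ω => A ω = a ∧ R ω = r) * pr q (fun ω => B ω = b ∧ R ω = r)))
      = pr q (fun ω => A ω = a ∧ B ω = b ∧ R ω = r) *
          Real.log (pr q (fun ω => A ω = a ∧ B ω = b ∧ R ω = r) /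
            pr p (fun ω => A ω = a ∧ B ω = b ∧ R ω = r))
        - pr q (fun ω => A ω = a ∧ B ω = b ∧ R ω = r) *
            Real.log (pr q (fun ω => R ω = r) / pr p (fun ω => R ω = r))
        - pr q (fun ω => A ω = a ∧ B ω = b ∧ R ω = r) *
            Real.log (pr q (fun ω => A ω = a ∧ R ω = r) /
              (pr p (fun ω => A ω = a ∧ R ω = r) * pr q (fun ω => R ω = r) /
                pr p (fun ω => R ω = r)))
        - pr q (fun ω => A ω = a ∧ B ω = b ∧ R ω = r) *
            Real.log (pr q (fun ω => B ω = b ∧ R ω = r) /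
              (pr p (fun ω => B ω = b ∧ R ω = r) * pr q (fun ω => R ω = r) /
                pr p (fun ω => R ω = r))) := by
    intro a b r
    rcases eq_or_ne (pr q (fun ω => A ω = a ∧ B ω = b ∧ R ω = r)) 0 with h0 | h0
    · rw [h0]; ring
    have hq3 : 0 < pr q (fun ω => A ω = a ∧ B ω = b ∧ R ω = r) :=
      lt_of_le_of_ne (pr_nonneg q hq0 _) (Ne.symm h0)
    have hqA : 0 < pr q (fun ω => A ω = a ∧ R ω = r) :=
      lt_of_lt_of_le hq3 (pr_mono q hq0 (fun ω h => ⟨h.1, h.2.2⟩))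
    have hqB : 0 < pr q (fun ω => B ω = b ∧ R ω = r) :=
      lt_of_lt_of_le hq3 (pr_mono q hq0 (fun ω h => h.2))
    have hqR : 0 < pr q (fun ω => R ω = r) :=
      lt_of_lt_of_le hq3 (pr_mono q hq0 (fun ω h => h.2.2))
    have hp3 : 0 < pr p (fun ω => A ω = a ∧ B ω = b ∧ R ω = r) := hppos _ hq3
    have hpA : 0 < pr p (fun ω => A ω = a ∧ R ω = r) :=
      lt_of_lt_of_le hp3 (pr_mono p hp0 (fun ω h => ⟨h.1, h.2.2⟩))
    have hpB : 0 < pr p (fun ω => B ω = b ∧ R ω = r) :=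
      lt_of_lt_of_le hp3 (pr_mono p hp0 (fun ω h => h.2))
    have hpR : 0 < pr p (fun ω => R ω = r) :=
      lt_of_lt_of_le hp3 (pr_mono p hp0 (fun ω h => h.2.2))
    have hip := hindep a b r
    have hlogip : Real.log (pr p (fun ω => A ω = a ∧ B ω = b ∧ R ω = r)) +
        Real.log (pr p (fun ω => R ω = r)) =
        Real.log (pr p (fun ω => A ω = a ∧ R ω = r)) +
        Real.log (pr p (fun ω => B ω = b ∧ R ω = r)) := by
      rw [← Real.log_mul hp3.ne' hpR.ne', ← Real.log_mul hpA.ne' hpB.ne', hip]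
    have hdA : 0 < pr p (fun ω => A ω = a ∧ R ω = r) * pr q (fun ω => R ω = r) /
        pr p (fun ω => R ω = r) := div_pos (mul_pos hpA hqR) hpR
    have hdB : 0 < pr p (fun ω => B ω = b ∧ R ω = r) * pr q (fun ω => R ω = r) /
        pr p (fun ω => R ω = r) := div_pos (mul_pos hpB hqR) hpR
    rw [Real.log_div (mul_pos hq3 hqR).ne' (mul_pos hqA hqB).ne',
        Real.log_mul hq3.ne' hqR.ne', Real.log_mul hqA.ne' hqB.ne',
        Real.log_div hq3.ne' hp3.ne', Real.log_div hqR.ne' hpR.ne',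
        Real.log_div hqA.ne' hdA.ne', Real.log_div hqB.ne' hdB.ne',
        Real.log_div (mul_pos hpA hqR).ne' hpR.ne', Real.log_div (mul_pos hpB hqR).ne' hpR.ne',
        Real.log_mul hpA.ne' hqR.ne', Real.log_mul hpB.ne' hqR.ne']
    linear_combination pr q (fun ω => A ω = a ∧ B ω = b ∧ R ω = r) * hlogip
  -- reorderings of the three correction sums
  have hV' : ∑ a, ∑ b, ∑ r, pr q (fun ω => A ω = a ∧ B ω = b ∧ R ω = r) *
      Real.log (pr q (fun ω => R ω = r) / pr p (fun ω => R ω = r))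
      = ∑ r, pr q (fun ω => R ω = r) *
          Real.log (pr q (fun ω => R ω = r) / pr p (fun ω => R ω = r)) := by
    have h1 : ∀ a : α, ∑ b, ∑ r, pr q (fun ω => A ω = a ∧ B ω = b ∧ R ω = r) *
        Real.log (pr q (fun ω => R ω = r) / pr p (fun ω => R ω = r))
        = ∑ r, pr q (fun ω => A ω = a ∧ R ω = r) *
            Real.log (pr q (fun ω => R ω = r) / pr p (fun ω => R ω = r)) := by
      intro a
      rw [Finset.sum_comm]
      exact Finset.sum_congr rfl fun r _ => by rw [← Finset.sum_mul, hmargB a r]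
    simp only [h1]
    rw [Finset.sum_comm]
    exact Finset.sum_congr rfl fun r _ => by rw [← Finset.sum_mul, hmargAR r]
  have hT1' : ∑ a, ∑ b, ∑ r, pr q (fun ω => A ω = a ∧ B ω = b ∧ R ω = r) *
      Real.log (pr q (fun ω => A ω = a ∧ R ω = r) /
        (pr p (fun ω => A ω = a ∧ R ω = r) * pr q (fun ω => R ω = r) /
          pr p (fun ω => R ω = r)))
      = ∑ a, ∑ r, pr q (fun ω => A ω = a ∧ R ω = r) *
          Real.log (pr q (fun ω => A ω = a ∧ R ω = r) /
            (pr p (fun ω => A ω = a ∧ R ω = r) * pr q (fun ω => R ω = r) /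
              pr p (fun ω => R ω = r))) := by
    apply Finset.sum_congr rfl; intro a _
    rw [Finset.sum_comm]
    exact Finset.sum_congr rfl fun r _ => by rw [← Finset.sum_mul, hmargB a r]
  have hT2' : ∑ a, ∑ b, ∑ r, pr q (fun ω => A ω = a ∧ B ω = b ∧ R ω = r) *
      Real.log (pr q (fun ω => B ω = b ∧ R ω = r) /
        (pr p (fun ω => B ω = b ∧ R ω = r) * pr q (fun ω => R ω = r) /
          pr p (fun ω => R ω = r)))
      = ∑ b, ∑ r, pr q (fun ω => B ω = b ∧ R ω = r) *
          Real.log (pr q (fun ω => B ω = b ∧ R ω = r) /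
            (pr p (fun ω => B ω = b ∧ R ω = r) * pr q (fun ω => R ω = r) /
              pr p (fun ω => R ω = r))) := by
    rw [Finset.sum_comm]
    apply Finset.sum_congr rfl; intro b _
    rw [Finset.sum_comm]
    exact Finset.sum_congr rfl fun r _ => by rw [← Finset.sum_mul, hmargA b r]
  -- assembling everything
  rw [condMutualInfo]
  simp only [Real.logb, ← mul_div_assoc, ← Finset.sum_div]
  apply div_le_div_of_nonneg_right ?_ (Real.log_nonneg one_le_two)
  calc ∑ a, ∑ b, ∑ r, pr q (fun ω => A ω = a ∧ B ω = b ∧ R ω = r) *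
        Real.log ((pr q (fun ω => A ω = a ∧ B ω = b ∧ R ω = r) * pr q (fun ω => R ω = r)) /
          (pr q (fun ω => A ω = a ∧ R ω = r) * pr q (fun ω => B ω = b ∧ R ω = r)))
      = (∑ a, ∑ b, ∑ r, pr q (fun ω => A ω = a ∧ B ω = b ∧ R ω = r) *
          Real.log (pr q (fun ω => A ω = a ∧ B ω = b ∧ R ω = r) /
            pr p (fun ω => A ω = a ∧ B ω = b ∧ R ω = r)))
        - (∑ a, ∑ b, ∑ r, pr q (fun ω => A ω = a ∧ B ω = b ∧ R ω = r) *
            Real.log (pr q (fun ω => R ω = r) / pr p (fun ω => R ω = r)))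
        - (∑ a, ∑ b, ∑ r, pr q (fun ω => A ω = a ∧ B ω = b ∧ R ω = r) *
            Real.log (pr q (fun ω => A ω = a ∧ R ω = r) /
              (pr p (fun ω => A ω = a ∧ R ω = r) * pr q (fun ω => R ω = r) /
                pr p (fun ω => R ω = r))))
        - (∑ a, ∑ b, ∑ r, pr q (fun ω => A ω = a ∧ B ω = b ∧ R ω = r) *
            Real.log (pr q (fun ω => B ω = b ∧ R ω = r) /
              (pr p (fun ω => B ω = b ∧ R ω = r) * pr q (fun ω => R ω = r) /
                pr p (fun ω => R ω = r)))) := by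
        simp only [← Finset.sum_sub_distrib]
        exact Finset.sum_congr rfl fun a _ => Finset.sum_congr rfl fun b _ =>
          Finset.sum_congr rfl fun r _ => hterm a b r
    _ ≤ Real.log (1 / pW) := by
        rw [hV', hT1', hT2']
        linarith [hU, hVge, hT1ge, hT2ge]
end

section
/- For real α with 0 < α ≤ 1, the product over integers j with 1 ≤ j ≤ 1/α of 1/(1 − (1−α)^j) is at most (3e)^{1/α}. -/
open Finset

/-- For real `0 < α ≤ 1`, the product over integers `1 ≤ j ≤ 1/α` of `1/(1 − (1−α)^j)`
is at most `(3e)^{1/α}`. -/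
theorem prod_small_j_le (α : ℝ) (hα0 : 0 < α) (hα1 : α ≤ 1) :
    ∏ j ∈ Finset.Icc 1 ⌊1 / α⌋₊, 1 / (1 - (1 - α) ^ j) ≤
      (3 * Real.exp 1) ^ ((1 : ℝ) / α) := by
  set x : ℝ := 1 / α with hxdef
  set N : ℕ := ⌊x⌋₊ with hNdef
  have hx0 : 0 < x := by positivity
  have hNx : (N : ℝ) ≤ x := Nat.floor_le hx0.le
  -- the factor denominators are at least αj/3
  have key : ∀ j ∈ Finset.Icc 1 N, α * j / 3 ≤ 1 - (1 - α) ^ j := by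
    intro j hj
    simp only [Finset.mem_Icc] at hj
    have hj1 : (1 : ℝ) ≤ j := by exact_mod_cast hj.1
    have hjN : (j : ℝ) ≤ N := by exact_mod_cast hj.2
    have hαj : α * j ≤ 1 := by
      have : (j : ℝ) ≤ 1 / α := hjN.trans hNx
      rw [le_div_iff₀ hα0] at this
      linarith
    have hb : (1 - α) ^ j * (1 + α * j) ≤ 1 := by
      have hber : 1 + (j : ℝ) * α ≤ (1 + α) ^ j := one_add_mul_le_pow (by linarith) j
      have h1 : (1 - α) ^ j * (1 + α * j) ≤ (1 - α) ^ j * (1 + α) ^ j := by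
        apply mul_le_mul_of_nonneg_left _ (pow_nonneg (by linarith) j)
        linarith [hber]
      have h2 : (1 - α) ^ j * (1 + α) ^ j = (1 - α ^ 2) ^ j := by
        rw [← mul_pow]; ring_nf
      have h3 : (1 - α ^ 2 : ℝ) ^ j ≤ 1 :=
        pow_le_one₀ (by nlinarith) (by nlinarith)
      calc (1 - α) ^ j * (1 + α * j) ≤ (1 - α ^ 2) ^ j := h2 ▸ h1
        _ ≤ 1 := h3
    have h1αj : (0:ℝ) < 1 + α * j := by positivity
    have hle : (1 - α) ^ j ≤ 1 / (1 + α * j) := by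
      rw [le_div_iff₀ h1αj]; exact hb
    have h2 : 1 / (1 + α * j) ≤ 1 - α * j / 3 := by
      rw [div_le_iff₀ h1αj]
      have hjn : (0:ℝ) ≤ α * j := by positivity
      nlinarith [mul_nonneg hjn hjn]
    linarith
  have hposj : ∀ j ∈ Finset.Icc 1 N, 0 < 1 - (1 - α) ^ j := by
    intro j hj
    refine lt_of_lt_of_le ?_ (key j hj)
    simp only [Finset.mem_Icc] at hj
    have hj1 : (1 : ℝ) ≤ j := by exact_mod_cast hj.1
    positivity
  have hstep : ∏ j ∈ Finset.Icc 1 N, 1 / (1 - (1 - α) ^ j) ≤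
      ∏ j ∈ Finset.Icc 1 N, 3 / (α * j) := by
    apply Finset.prod_le_prod
    · intro j hj
      have hpos := hposj j hj
      positivity
    · intro j hj
      have hpos := hposj j hj
      simp only [Finset.mem_Icc] at hj
      have hj1 : (1 : ℝ) ≤ j := by exact_mod_cast hj.1
      have hαjpos : 0 < α * j := by positivity
      rw [div_le_div_iff₀ hpos hαjpos]
      have := key j (by simp only [Finset.mem_Icc]; exact hj)
      nlinarith
  have hprod : ∏ j ∈ Finset.Icc 1 N, 3 / (α * (j:ℝ)) = 3 ^ N * x ^ N / (Nat.factorial N : ℝ) := by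
    have h1 : ∀ j ∈ Finset.Icc 1 N, 3 / (α * (j:ℝ)) = (3 * x) * ((j:ℝ))⁻¹ := by
      intro j hj
      rw [hxdef]
      field_simp
    rw [Finset.prod_congr rfl h1, Finset.prod_mul_distrib, Finset.prod_const,
      Nat.card_Icc, Finset.prod_inv_distrib]
    have h2 : ∏ j ∈ Finset.Icc 1 N, (j : ℝ) = (Nat.factorial N : ℝ) := by
      rw [← Nat.cast_prod, ← Finset.Ico_add_one_right_eq_Icc, Finset.prod_Ico_id_eq_factorial]
    rw [h2]
    simp only [Nat.add_sub_cancel]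
    rw [mul_pow]
    ring
  have hfin : 3 ^ N * x ^ N / (Nat.factorial N : ℝ) ≤ (3 * Real.exp 1) ^ x := by
    have hexp : x ^ N / (Nat.factorial N : ℝ) ≤ Real.exp x := Real.pow_div_factorial_le_exp x hx0.le N
    have h3N : (3:ℝ) ^ N ≤ (3:ℝ) ^ x := by
      rw [← Real.rpow_natCast 3 N]
      exact Real.rpow_le_rpow_of_exponent_le (by norm_num) hNx
    have hrhs : (3 * Real.exp 1 : ℝ) ^ x = (3:ℝ) ^ x * Real.exp x := by
      rw [Real.mul_rpow (by norm_num) (Real.exp_pos 1).le, Real.exp_one_rpow]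
    rw [hrhs]
    calc 3 ^ N * x ^ N / (Nat.factorial N : ℝ) = 3 ^ N * (x ^ N / (Nat.factorial N : ℝ)) := by ring
      _ ≤ 3 ^ N * Real.exp x := by
          apply mul_le_mul_of_nonneg_left hexp (by positivity)
      _ ≤ (3:ℝ) ^ x * Real.exp x := by
          apply mul_le_mul_of_nonneg_right h3N (Real.exp_pos x).le
  calc ∏ j ∈ Finset.Icc 1 N, 1 / (1 - (1 - α) ^ j)
      ≤ ∏ j ∈ Finset.Icc 1 N, 3 / (α * j) := hstep
    _ = 3 ^ N * x ^ N / (Nat.factorial N : ℝ) := hprod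
    _ ≤ (3 * Real.exp 1) ^ x := hfin
end

section
/- For real α with 0 < α < 1, the product over all integers j > 1/α of 1/(1 − (1−α)^j) converges and is at most e^{2/(e·α)}. -/
open Real

/-- For real `0 < α < 1`, the product over all integers `j > 1/α` of `1/(1 − (1−α)^j)`
converges and is at most `e^{2/(e·α)}`. The product is encoded as a `tprod` of the
function which is `1/(1 − (1−α)^j)` when `j > 1/α` and `1` otherwise. -/
theorem prod_large_j_le (α : ℝ) (hα0 : 0 < α) (hα1 : α < 1) :
    Multipliable (fun j : ℕ => if 1 / α < (j : ℝ) then 1 / (1 - (1 - α) ^ j) else 1) ∧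
      (∏' j : ℕ, if 1 / α < (j : ℝ) then 1 / (1 - (1 - α) ^ j) else 1) ≤
        Real.exp (2 / (Real.exp 1 * α)) := by
  set f : ℕ → ℝ := fun j => if 1 / α < (j : ℝ) then 1 / (1 - (1 - α) ^ j) else 1 with hf
  have hb0 : (0:ℝ) < 1 - α := by linarith
  have hb1 : 1 - α < 1 := by linarith
  -- key: (1-α)^j ≤ exp (-1) whenever 1/α < j
  have hkey : ∀ j : ℕ, 1 / α < (j : ℝ) → (1 - α) ^ j ≤ Real.exp (-1) := by
    intro j hj
    rw [← Real.exp_log (pow_pos hb0 j), Real.log_pow]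
    apply Real.exp_le_exp.mpr
    have hL : Real.log (1 - α) ≤ -α := by
      have := Real.log_le_sub_one_of_pos hb0
      linarith
    have hLneg : Real.log (1 - α) ≤ 0 := by
      have := Real.log_nonpos (le_of_lt hb0) (le_of_lt hb1)
      linarith
    calc (j : ℝ) * Real.log (1 - α) ≤ (1 / α) * Real.log (1 - α) := by
          apply mul_le_mul_of_nonpos_right (le_of_lt hj) hLneg
      _ ≤ (1 / α) * (-α) := by
          apply mul_le_mul_of_nonneg_left hL (by positivity)
      _ = -1 := by field_simp
  have hexp1 : (2:ℝ) ≤ Real.exp 1 := by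
    have := Real.add_one_le_exp (1:ℝ); linarith
  have hhalf : ∀ j : ℕ, 1 / α < (j : ℝ) → (1 - α) ^ j ≤ 1 / 2 := by
    intro j hj
    refine (hkey j hj).trans ?_
    rw [Real.exp_neg]
    rw [inv_le_comm₀ (Real.exp_pos 1) (by norm_num)] at *
    simpa using hexp1
  have hxlt : ∀ j : ℕ, 1 / α < (j : ℝ) → (1 - α) ^ j < 1 := fun j hj =>
    lt_of_le_of_lt (hhalf j hj) (by norm_num)
  have hfpos : ∀ j : ℕ, 0 < f j := by
    intro j
    simp only [hf]
    split_ifs with h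
    · have h2 : 0 < 1 - (1 - α) ^ j := by linarith [hxlt j h]
      positivity
    · norm_num
  -- log bound
  set g : ℕ → ℝ := fun j => if 1 / α < (j : ℝ) then 2 * (1 - α) ^ j else 0 with hg
  have hlog_nonneg : ∀ j, 0 ≤ Real.log (f j) := by
    intro j
    apply Real.log_nonneg
    simp only [hf]
    split_ifs with h
    · rw [le_div_iff₀ (by linarith [hxlt j h]), one_mul]
      have := pow_pos hb0 j
      linarith
    · exact le_refl 1
  have hlog_le : ∀ j, Real.log (f j) ≤ g j := by
    intro j
    simp only [hf, hg]
    split_ifs with h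
    · have hx0 : 0 < (1 - α) ^ j := pow_pos hb0 j
      have hx1 : (1 - α) ^ j < 1 := hxlt j h
      have hxh : (1 - α) ^ j ≤ 1 / 2 := hhalf j h
      have hd : 0 < 1 - (1 - α) ^ j := by linarith
      rw [Real.log_le_iff_le_exp (by positivity)]
      rw [div_le_iff₀ (by linarith)]
      nlinarith [Real.add_one_le_exp (2 * (1 - α) ^ j), Real.exp_pos (2 * (1 - α) ^ j)]
    · simp
  have hgsummable : Summable g := by
    apply Summable.of_nonneg_of_le (fun j => ?_) (fun j => ?_)
      ((summable_geometric_of_lt_one (le_of_lt hb0) hb1).mul_left 2)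
    · simp only [hg]; split_ifs with h
      · positivity
      · exact le_refl 0
    · simp only [hg]; split_ifs with h
      · exact le_refl _
      · positivity
  have hlsummable : Summable fun j => Real.log (f j) :=
    Summable.of_nonneg_of_le hlog_nonneg hlog_le hgsummable
  have hprod : HasProd f (Real.exp (∑' j, Real.log (f j))) := by
    have h := hlsummable.hasSum.rexp
    have he : (Real.exp ∘ fun j => Real.log (f j)) = f :=
      funext fun j => Real.exp_log (hfpos j)
    rwa [he] at h
  refine ⟨hprod.multipliable, ?_⟩
  rw [hprod.tprod_eq]
  apply Real.exp_le_exp.mpr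
  -- compute tsum g
  set N : ℕ := ⌊1 / α⌋₊ + 1 with hN
  have hNgt : 1 / α < (N : ℝ) := by
    have := Nat.lt_floor_add_one (1 / α)
    rw [hN]; push_cast; linarith
  have hcond : ∀ j : ℕ, (1 / α < (j : ℝ)) ↔ N ≤ j := by
    intro j
    rw [hN, Nat.add_one_le_iff, Nat.floor_lt (by positivity)]
  have hgshift : ∀ j : ℕ, g (j + N) = (2 * (1 - α) ^ N) * (1 - α) ^ j := by
    intro j
    simp only [hg]
    rw [if_pos (by rw [hcond]; omega), pow_add]
    ring
  have htsumg : ∑' j, g j = 2 * (1 - α) ^ N / α := by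
    rw [← Summable.sum_add_tsum_nat_add N hgsummable]
    have h1 : ∑ j ∈ Finset.range N, g j = 0 := by
      apply Finset.sum_eq_zero
      intro j hj
      rw [Finset.mem_range] at hj
      simp only [hg]
      rw [if_neg]
      rw [hcond]
      omega
    rw [h1, zero_add]
    calc ∑' j : ℕ, g (j + N) = ∑' j : ℕ, (2 * (1 - α) ^ N) * (1 - α) ^ j := by
          exact tsum_congr hgshift
      _ = (2 * (1 - α) ^ N) * (1 - (1 - α))⁻¹ := by
          rw [tsum_mul_left, tsum_geometric_of_lt_one (le_of_lt hb0) hb1]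
      _ = 2 * (1 - α) ^ N / α := by
          rw [sub_sub_cancel]
          field_simp
  calc ∑' j, Real.log (f j) ≤ ∑' j, g j := Summable.tsum_le_tsum hlog_le hlsummable hgsummable
    _ = 2 * (1 - α) ^ N / α := htsumg
    _ ≤ 2 / (Real.exp 1 * α) := by
        rw [div_le_div_iff₀ hα0 (by positivity)]
        have h2 : (1 - α) ^ N ≤ Real.exp (-1) := hkey N hNgt
        have : (1 - α) ^ N * Real.exp 1 ≤ 1 := by
          rw [Real.exp_neg] at h2
          calc (1 - α) ^ N * Real.exp 1 ≤ (Real.exp 1)⁻¹ * Real.exp 1 := by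
                apply mul_le_mul_of_nonneg_right h2 (Real.exp_pos 1).le
            _ = 1 := inv_mul_cancel₀ (Real.exp_pos 1).ne'
        nlinarith [Real.exp_pos 1]
end

section
/- Suppose a randomized data structure for incremental spanning forest succeeds with probability at least ε > 0 on each labeled tree input (over its internal randomness), and uses S bits of memory. Then S ≥ (n−2)·log n − log(1/ε). -/
open Finset
open scoped Classical

namespace PruferLB

variable {n : ℕ}

/-- Prüfer decoding: given a sequence `l` and vertex set `V` (invariant:
`V.card = l.length + 2`), build a tree spanning `V`. -/
def decode : List (Fin n) → Finset (Fin n) → SimpleGraph (Fin n)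
  | [], V => SimpleGraph.fromEdgeSet {e | ∀ x ∈ e, x ∈ V}
  | a :: t, V =>
    if h : (V \ (a :: t).toFinset).Nonempty then
      SimpleGraph.fromEdgeSet {s((V \ (a :: t).toFinset).min' h, a)}
        ⊔ decode t (V.erase ((V \ (a :: t).toFinset).min' h))
    else ⊥

lemma decode_nil_adj {V : Finset (Fin n)} {x y : Fin n} :
    (decode [] V).Adj x y ↔ x ≠ y ∧ x ∈ V ∧ y ∈ V := by
  simp only [decode, SimpleGraph.fromEdgeSet_adj, Set.mem_setOf_eq, Sym2.mem_iff]
  constructor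
  · rintro ⟨h, hne⟩
    exact ⟨hne, h x (Or.inl rfl), h y (Or.inr rfl)⟩
  · rintro ⟨hne, hx, hy⟩
    refine ⟨?_, hne⟩
    rintro z (rfl | rfl) <;> assumption

lemma single_edge_adj {u a x y : Fin n} (hua : u ≠ a) :
    (SimpleGraph.fromEdgeSet {s(u, a)} : SimpleGraph (Fin n)).Adj x y ↔
      (x = u ∧ y = a) ∨ (x = a ∧ y = u) := by
  rw [SimpleGraph.fromEdgeSet_adj]
  constructor
  · rintro ⟨h, hne⟩
    rw [Set.mem_singleton_iff, Sym2.eq_iff] at h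
    tauto
  · rintro (⟨rfl, rfl⟩ | ⟨rfl, rfl⟩)
    · exact ⟨Set.mem_singleton _, hua⟩
    · exact ⟨by rw [Set.mem_singleton_iff, Sym2.eq_swap], hua.symm⟩

lemma exists_first_edge {H : SimpleGraph (Fin n)} {x y : Fin n} (hxy : x ≠ y)
    (q : H.Walk x y) : ∃ w, H.Adj x w ∧ s(x, w) ∈ q.edges := by
  cases q with
  | nil => exact absurd rfl hxy
  | cons h p => exact ⟨_, h, by simp⟩

lemma adj_of_sup_edge {G : SimpleGraph (Fin n)} {u a w : Fin n}
    (hu : ∀ w, ¬ G.Adj u w) (hua : u ≠ a)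
    (h : (SimpleGraph.fromEdgeSet {s(u, a)} ⊔ G).Adj u w) : w = a := by
  rcases h with h | h
  · rcases (single_edge_adj hua).mp h with ⟨-, rfl⟩ | ⟨h1, -⟩
    · rfl
    · exact absurd h1 hua
  · exact absurd h (hu w)

lemma pendant_acyclic {G : SimpleGraph (Fin n)} {u a : Fin n} (hG : G.IsAcyclic)
    (hu : ∀ w, ¬ G.Adj u w) (hua : u ≠ a) :
    (SimpleGraph.fromEdgeSet {s(u, a)} ⊔ G).IsAcyclic := by
  intro v c hc
  by_cases husup : u ∈ c.support
  · have hc' := hc.rotate husup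
    set c' := c.rotate u husup with hc'def
    clear_value c'
    cases c' with
    | nil => simp at hc'
    | @cons _ w _ hadj p =>
      have hw : w = a := adj_of_sup_edge hu hua hadj
      subst w
      rw [SimpleGraph.Walk.cons_isCycle_iff] at hc'
      obtain ⟨w', hadj', hmem⟩ := exists_first_edge hua p.reverse
      have hw' : w' = a := adj_of_sup_edge hu hua hadj'
      subst w'
      rw [SimpleGraph.Walk.edges_reverse, List.mem_reverse] at hmem
      exact hc'.2 hmem
  · have hsub : ∀ e ∈ c.edges, e ∈ G.edgeSet := by
      intro e he
      induction e using Sym2.ind with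
      | _ x y =>
        have hx : x ∈ c.support := c.fst_mem_support_of_mem_edges he
        have hy : y ∈ c.support := c.snd_mem_support_of_mem_edges he
        have hxy : (SimpleGraph.fromEdgeSet {s(u, a)} ⊔ G).Adj x y := c.edges_subset_edgeSet he
        rcases hxy with h | h
        · rcases (single_edge_adj hua).mp h with ⟨rfl, -⟩ | ⟨-, rfl⟩
          · exact absurd hx husup
          · exact absurd hy husup
        · exact h
    exact hG _ (hc.transfer hsub)

lemma decode_props (l : List (Fin n)) : ∀ (V : Finset (Fin n)),
    V.card = l.length + 2 → (∀ x ∈ l, x ∈ V) →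
    (∀ x y, (decode l V).Adj x y → x ∈ V ∧ y ∈ V) ∧
    (∀ x ∈ V, ∀ y ∈ V, (decode l V).Reachable x y) ∧
    (decode l V).IsAcyclic ∧
    (∀ x ∈ V, (x ∈ l ↔ ∃ y z, y ≠ z ∧ (decode l V).Adj x y ∧ (decode l V).Adj x z)) := by
  induction l with
  | nil =>
    intro V hV hl
    have hV2 : V.card = 2 := by simpa using hV
    refine ⟨fun x y h => ⟨(decode_nil_adj.mp h).2.1, (decode_nil_adj.mp h).2.2⟩, ?_, ?_, ?_⟩
    · intro x hx y hy
      rcases eq_or_ne x y with rfl | hne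
      · exact SimpleGraph.Reachable.refl x
      · exact (decode_nil_adj.mpr ⟨hne, hx, hy⟩).reachable
    · -- acyclic
      obtain ⟨p, q, hpq, hVpq⟩ := Finset.card_eq_two.mp hV2
      intro v c hc
      have h3 : 3 ≤ c.length := hc.three_le_length
      have hedges : ∀ e ∈ c.edges, e = s(p, q) := by
        intro e he
        induction e using Sym2.ind with
        | _ x y =>
          have h := decode_nil_adj.mp (c.edges_subset_edgeSet he)
          obtain ⟨hne, hx, hy⟩ := h
          rw [hVpq] at hx hy
          simp only [Finset.mem_insert, Finset.mem_singleton] at hx hy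
          rcases hx with rfl | rfl <;> rcases hy with rfl | rfl
          · exact absurd rfl hne
          · rfl
          · rw [Sym2.eq_swap]
          · exact absurd rfl hne
      have hnd : c.edges.Nodup := hc.edges_nodup
      have hsubs : c.edges.toFinset ⊆ {s(p, q)} := by
        intro e he
        rw [List.mem_toFinset] at he
        simp [hedges e he]
      have hcard1 : c.edges.toFinset.card ≤ 1 := by
        simpa using Finset.card_le_card hsubs
      rw [List.toFinset_card_of_nodup hnd, SimpleGraph.Walk.length_edges] at hcard1
      omega
    · intro x hx
      constructor
      · intro h; simp at h
      · rintro ⟨y, z, hyz, h1, h2⟩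
        obtain ⟨hxy, -, hy⟩ := decode_nil_adj.mp h1
        obtain ⟨hxz, -, hz⟩ := decode_nil_adj.mp h2
        have hsub : ({x, y, z} : Finset (Fin n)) ⊆ V := by
          intro w hw
          simp only [Finset.mem_insert, Finset.mem_singleton] at hw
          rcases hw with rfl | rfl | rfl <;> assumption
        have hc3 : ({x, y, z} : Finset (Fin n)).card = 3 := by
          rw [Finset.card_insert_of_notMem (by simp [hxy, hxz]),
            Finset.card_insert_of_notMem (by simp [hyz]), Finset.card_singleton]
        have := Finset.card_le_card hsub
        rw [hc3, hV2] at this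
        omega
  | cons a t ih =>
    intro V hV hl
    have hVcard : V.card = t.length + 3 := by simpa using hV
    have htoF : (a :: t).toFinset ⊆ V := by
      intro x hx
      exact hl x (List.mem_toFinset.mp hx)
    have hWne : (V \ (a :: t).toFinset).Nonempty := by
      rw [← Finset.card_pos, Finset.card_sdiff_of_subset htoF]
      have h1 : (a :: t).toFinset.card ≤ t.length + 1 := by
        simpa using List.toFinset_card_le (a :: t)
      omega
    set u := (V \ (a :: t).toFinset).min' hWne with hu
    have hud : u ∈ V \ (a :: t).toFinset := Finset.min'_mem _ _
    have huV : u ∈ V := (Finset.mem_sdiff.mp hud).1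
    have hunotin : u ∉ (a :: t).toFinset := (Finset.mem_sdiff.mp hud).2
    have hua : u ≠ a := by
      intro h; exact hunotin (by simp [h])
    have hut : u ∉ t := fun h => hunotin (by simp [h])
    have haV : a ∈ V := hl a ((List.mem_cons_self (a := a) (l := t)))
    have haVe : a ∈ V.erase u := Finset.mem_erase.mpr ⟨hua.symm, haV⟩
    have hdef : decode (a :: t) V
        = SimpleGraph.fromEdgeSet {s(u, a)} ⊔ decode t (V.erase u) := by
      rw [decode, dif_pos hWne]
    have hcarde : (V.erase u).card = t.length + 2 := by
      rw [Finset.card_erase_of_mem huV]; omega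
    have hvalse : ∀ x ∈ t, x ∈ V.erase u := by
      intro x hx
      exact Finset.mem_erase.mpr ⟨fun h => hut (h ▸ hx), hl x (List.mem_cons_of_mem a hx)⟩
    obtain ⟨ihA, ihR, ihC, ihL⟩ := ih (V.erase u) hcarde hvalse
    have hGadj : ∀ x y, (decode (a :: t) V).Adj x y ↔
        (((x = u ∧ y = a) ∨ (x = a ∧ y = u)) ∨ (decode t (V.erase u)).Adj x y) := by
      intro x y
      rw [hdef, SimpleGraph.sup_adj, single_edge_adj hua]
    have hle : decode t (V.erase u) ≤ decode (a :: t) V := by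
      rw [hdef]; exact le_sup_right
    have hAdjua : (decode (a :: t) V).Adj u a := (hGadj u a).mpr (Or.inl (Or.inl ⟨rfl, rfl⟩))
    refine ⟨?_, ?_, ?_, ?_⟩
    · -- (a) endpoints in V
      intro x y h
      rcases (hGadj x y).mp h with (⟨rfl, rfl⟩ | ⟨rfl, rfl⟩) | h
      · exact ⟨huV, haV⟩
      · exact ⟨haV, huV⟩
      · obtain ⟨h1, h2⟩ := ihA x y h
        exact ⟨Finset.mem_of_mem_erase h1, Finset.mem_of_mem_erase h2⟩
    · -- (b) reachability
      have key : ∀ x ∈ V, (decode (a :: t) V).Reachable x a := by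
        intro x hx
        rcases eq_or_ne x u with hxU | hxu
        · rw [hxU]; exact hAdjua.reachable
        · exact ((ihR x (Finset.mem_erase.mpr ⟨hxu, hx⟩) a haVe).mono hle)
      intro x hx y hy
      exact (key x hx).trans (key y hy).symm
    · -- (c) acyclic
      rw [hdef]
      refine pendant_acyclic ihC ?_ hua
      intro w h
      exact absurd (ihA u w h).1 (Finset.notMem_erase u V)
    · -- (d) leaf characterization
      intro x hx
      constructor
      · intro hxl
        rcases List.mem_cons.mp hxl with hax | hxt
        · -- x = a
          obtain ⟨w, hw, hwa⟩ : ∃ w ∈ V.erase u, w ≠ a := by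
            refine Finset.exists_mem_ne ?_ a
            omega
          obtain ⟨pw⟩ := ihR a haVe w hw
          obtain ⟨z, hz, -⟩ := exists_first_edge (Ne.symm hwa) pw
          have hzu : z ≠ u := by
            intro h
            exact absurd ((ihA a z hz).2) (h ▸ Finset.notMem_erase u V)
          rw [hax]
          exact ⟨u, z, Ne.symm hzu, hAdjua.symm, hle hz⟩
        · -- x ∈ t
          have hxe : x ∈ V.erase u :=
            Finset.mem_erase.mpr ⟨fun h => hut (h ▸ hxt), hx⟩
          obtain ⟨y, z, hyz, h1, h2⟩ := (ihL x hxe).mp hxt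
          exact ⟨y, z, hyz, hle h1, hle h2⟩
      · rintro ⟨y, z, hyz, h1, h2⟩
        by_contra hxl
        have hxa : x ≠ a := fun h => hxl (h ▸ (List.mem_cons_self (a := a) (l := t)))
        have hxt : x ∉ t := fun h => hxl (List.mem_cons_of_mem a h)
        rcases eq_or_ne x u with hxU | hxu
        · have huniq : ∀ w, (decode (a :: t) V).Adj x w → w = a := by
            intro w hw
            rcases (hGadj x w).mp hw with (⟨-, h'⟩ | ⟨h', -⟩) | h'
            · exact h'
            · exact absurd h' hxa
            · exact absurd (ihA x w h').1 (by rw [hxU]; exact Finset.notMem_erase u V)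
          exact hyz ((huniq y h1).trans (huniq z h2).symm)
        · have hconv : ∀ w, (decode (a :: t) V).Adj x w → (decode t (V.erase u)).Adj x w := by
            intro w hw
            rcases (hGadj x w).mp hw with (⟨h', -⟩ | ⟨h', -⟩) | h'
            · exact absurd h' hxu
            · exact absurd h' hxa
            · exact h'
          exact hxt ((ihL x (Finset.mem_erase.mpr ⟨hxu, hx⟩)).mpr ⟨y, z, hyz, hconv y h1, hconv z h2⟩)

lemma decode_inj (l : List (Fin n)) : ∀ (l' : List (Fin n)) (V : Finset (Fin n)),
    V.card = l.length + 2 → (∀ x ∈ l, x ∈ V) → (∀ x ∈ l', x ∈ V) →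
    l.length = l'.length → decode l V = decode l' V → l = l' := by
  induction l with
  | nil =>
    intro l' V _ _ _ hlen _
    exact (List.length_eq_zero_iff.mp hlen.symm).symm
  | cons a t ih =>
    intro l' V hV hl hl' hlen heq
    obtain ⟨a', t', rfl⟩ : ∃ a' t', l' = a' :: t' := by
      cases l' with
      | nil => simp at hlen
      | cons a' t' => exact ⟨a', t', rfl⟩
    obtain ⟨A, R, C, L⟩ := decode_props (a :: t) V hV hl
    obtain ⟨A', R', C', L'⟩ := decode_props (a' :: t') V (by rw [hV, hlen]) hl'
    -- the candidate sets agree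
    have hWW : V \ (a :: t).toFinset = V \ (a' :: t').toFinset := by
      ext x
      simp only [Finset.mem_sdiff, List.mem_toFinset]
      constructor <;> rintro ⟨hxV, hxn⟩ <;> refine ⟨hxV, fun hmem => hxn ?_⟩
      · exact (L x hxV).mpr (heq ▸ ((L' x hxV).mp hmem))
      · exact (L' x hxV).mpr (heq.symm ▸ ((L x hxV).mp hmem))
    have htoF : (a :: t).toFinset ⊆ V := fun x hx => hl x (List.mem_toFinset.mp hx)
    have hWne : (V \ (a :: t).toFinset).Nonempty := by
      rw [← Finset.card_pos, Finset.card_sdiff_of_subset htoF]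
      have h1 : (a :: t).toFinset.card ≤ t.length + 1 := by
        simpa using List.toFinset_card_le (a :: t)
      simp only [List.length_cons] at hV
      omega
    have hWne' : (V \ (a' :: t').toFinset).Nonempty := hWW ▸ hWne
    set u := (V \ (a :: t).toFinset).min' hWne with hudef
    have humin : u = (V \ (a' :: t').toFinset).min' hWne' := by
      refine le_antisymm ?_ ?_
      · refine Finset.min'_le _ _ ?_
        rw [hWW]
        exact Finset.min'_mem _ hWne'
      · refine Finset.min'_le _ _ ?_
        rw [← hWW]
        exact Finset.min'_mem _ hWne
    have hud : u ∈ V \ (a :: t).toFinset := Finset.min'_mem _ _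
    have huV : u ∈ V := (Finset.mem_sdiff.mp hud).1
    have hunotin : u ∉ (a :: t).toFinset := (Finset.mem_sdiff.mp hud).2
    have hua : u ≠ a := fun h => hunotin (by simp [h])
    have hut : u ∉ t := fun h => hunotin (by simp [h])
    have hud2 : u ∈ V \ (a' :: t').toFinset := by rw [← hWW]; exact hud
    have hunotin' : u ∉ (a' :: t').toFinset := (Finset.mem_sdiff.mp hud2).2
    have hua' : u ≠ a' := fun h => hunotin' (by simp [h])
    have hut' : u ∉ t' := fun h => hunotin' (by simp [h])
    have hdef : decode (a :: t) V
        = SimpleGraph.fromEdgeSet {s(u, a)} ⊔ decode t (V.erase u) := by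
      rw [decode, dif_pos hWne]
    have hdef' : decode (a' :: t') V
        = SimpleGraph.fromEdgeSet {s(u, a')} ⊔ decode t' (V.erase u) := by
      rw [decode, dif_pos hWne', ← humin]
    have hGadj : ∀ x y, (decode (a :: t) V).Adj x y ↔
        (((x = u ∧ y = a) ∨ (x = a ∧ y = u)) ∨ (decode t (V.erase u)).Adj x y) := by
      intro x y
      rw [hdef, SimpleGraph.sup_adj, single_edge_adj hua]
    have hGadj' : ∀ x y, (decode (a' :: t') V).Adj x y ↔
        (((x = u ∧ y = a') ∨ (x = a' ∧ y = u)) ∨ (decode t' (V.erase u)).Adj x y) := by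
      intro x y
      rw [hdef', SimpleGraph.sup_adj, single_edge_adj hua']
    have hAdjua : (decode (a :: t) V).Adj u a := (hGadj u a).mpr (Or.inl (Or.inl ⟨rfl, rfl⟩))
    have hAdjua' : (decode (a :: t) V).Adj u a' := by
      rw [heq]
      exact (hGadj' u a').mpr (Or.inl (Or.inl ⟨rfl, rfl⟩))
    -- u is a leaf, so its neighbor is unique: a = a'
    have haa : a = a' := by
      by_contra hne
      have h := (L u huV).mpr ⟨a, a', hne, hAdjua, hAdjua'⟩
      exact hunotin (List.mem_toFinset.mpr h)
    subst a'
    -- the tails decode to the same graph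
    have ihAe := (decode_props t (V.erase u)
      (by rw [Finset.card_erase_of_mem huV]; simp only [List.length_cons] at hV; omega)
      (fun x hx => Finset.mem_erase.mpr ⟨fun h => hut (h ▸ hx), hl x (List.mem_cons_of_mem a hx)⟩)).1
    have hlen' : t.length = t'.length := by simpa using hlen
    have ihAe' := (decode_props t' (V.erase u)
      (by rw [Finset.card_erase_of_mem huV]
          simp only [List.length_cons] at hV hlen
          omega)
      (fun x hx => Finset.mem_erase.mpr ⟨fun h => hut' (h ▸ hx), hl' x (List.mem_cons_of_mem a hx)⟩)).1
    have hrestr : ∀ (s : List (Fin n))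
        (hA : ∀ x y, (decode s (V.erase u)).Adj x y → x ∈ V.erase u ∧ y ∈ V.erase u)
        (hd : decode (a :: s) V
          = SimpleGraph.fromEdgeSet {s(u, a)} ⊔ decode s (V.erase u))
        (x y : Fin n),
        (decode s (V.erase u)).Adj x y ↔
          ((decode (a :: s) V).Adj x y ∧ x ≠ u ∧ y ≠ u) := by
      intro s hA hd x y
      constructor
      · intro h
        obtain ⟨h1, h2⟩ := hA x y h
        refine ⟨by rw [hd]; exact Or.inr h, (Finset.mem_erase.mp h1).1, (Finset.mem_erase.mp h2).1⟩
      · rintro ⟨h, hxu, hyu⟩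
        rw [hd, SimpleGraph.sup_adj, single_edge_adj hua] at h
        rcases h with (⟨h', -⟩ | ⟨-, h'⟩) | h'
        · exact absurd h' hxu
        · exact absurd h' hyu
        · exact h'
    have hteq : decode t (V.erase u) = decode t' (V.erase u) := by
      ext x y
      rw [hrestr t ihAe hdef, hrestr t' ihAe' hdef', heq]
    have := ih t' (V.erase u)
      (by rw [Finset.card_erase_of_mem huV]; simp only [List.length_cons] at hV; omega)
      (fun x hx => Finset.mem_erase.mpr ⟨fun h => hut (h ▸ hx), hl x (List.mem_cons_of_mem a hx)⟩)
      (fun x hx => Finset.mem_erase.mpr ⟨fun h => hut' (h ▸ hx), hl' x (List.mem_cons_of_mem a hx)⟩)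
      hlen' hteq
    rw [this]


lemma decode_tree (hn : 2 ≤ n) (f : Fin (n - 2) → Fin n) :
    (decode (List.ofFn f) (Finset.univ : Finset (Fin n))).IsTree := by
  have hcard : (Finset.univ : Finset (Fin n)).card = (List.ofFn f).length + 2 := by
    simp only [Finset.card_univ, Fintype.card_fin, List.length_ofFn]
    omega
  obtain ⟨A, R, C, L⟩ := decode_props (List.ofFn f) Finset.univ hcard
    (fun x _ => Finset.mem_univ x)
  refine ⟨?_, C⟩
  rw [SimpleGraph.connected_iff]
  exact ⟨fun x y => R x (Finset.mem_univ x) y (Finset.mem_univ y), ⟨⟨0, by omega⟩⟩⟩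

lemma decode_injective (hn : 2 ≤ n) :
    Function.Injective
      (fun f : Fin (n - 2) → Fin n => decode (List.ofFn f) (Finset.univ : Finset (Fin n))) := by
  intro f g h
  have hcard : (Finset.univ : Finset (Fin n)).card = (List.ofFn f).length + 2 := by
    simp only [Finset.card_univ, Fintype.card_fin, List.length_ofFn]
    omega
  have := decode_inj (List.ofFn f) (List.ofFn g) Finset.univ hcard
    (fun x _ => Finset.mem_univ x) (fun x _ => Finset.mem_univ x)
    (by simp) h
  exact List.ofFn_injective this

end PruferLB

/-- A randomized incremental spanning-forest data structure with `S` bits of memory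
(state space of size at most `2^S`), whose components may depend on a random seed drawn
from distribution `q`, and which on each labeled tree input (edges fed in a fixed order)
outputs the tree with probability at least `ε > 0` over the seed, must satisfy
`S ≥ (n−2)·log n − log(1/ε)` (base-2 logs). -/
theorem randomized_incremental_spanning_forest_lb (n S : ℕ) (hn : 2 ≤ n)
    (ε : ℝ) (hε : 0 < ε)
    (Seed : Type) [Fintype Seed] (q : Seed → ℝ) (hq0 : ∀ s, 0 ≤ q s) (hq1 : ∑ s, q s = 1)
    (State : Type) [Fintype State] (hcard : Fintype.card State ≤ 2 ^ S)
    (init : Seed → State) (ins : Seed → State → Sym2 (Fin n) → State)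
    (query : Seed → State → SimpleGraph (Fin n))
    (order : SimpleGraph (Fin n) → List (Sym2 (Fin n)))
    (horder : ∀ G : SimpleGraph (Fin n), ∀ e, e ∈ order G ↔ e ∈ G.edgeSet)
    (hcorrect : ∀ G : SimpleGraph (Fin n), G.IsTree →
      ε ≤ ∑ s ∈ Finset.univ.filter
            (fun s => query s ((order G).foldl (ins s) (init s)) = G), q s) :
    ((n : ℝ) - 2) * Real.logb 2 n - Real.logb 2 (1 / ε) ≤ S := by
  classical
  set T : Finset (SimpleGraph (Fin n)) :=
    Finset.image (fun f : Fin (n - 2) → Fin n => PruferLB.decode (List.ofFn f) Finset.univ)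
      Finset.univ with hT
  have hTcard : T.card = n ^ (n - 2) := by
    rw [hT, Finset.card_image_of_injective _ (PruferLB.decode_injective hn), Finset.card_univ,
      Fintype.card_fun, Fintype.card_fin, Fintype.card_fin]
  have htree : ∀ G ∈ T, G.IsTree := by
    intro G hG
    rw [hT, Finset.mem_image] at hG
    obtain ⟨f, -, rfl⟩ := hG
    exact PruferLB.decode_tree hn f
  have key : ∀ s : Seed,
      ((T.filter (fun G => query s ((order G).foldl (ins s) (init s)) = G)).card : ℝ)
        ≤ (2 : ℝ) ^ S := by
    intro s
    have hinj : Set.InjOn (fun G => (order G).foldl (ins s) (init s))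
        (T.filter (fun G => query s ((order G).foldl (ins s) (init s)) = G)) := by
      intro G1 h1 G2 h2 hfg
      simp only [Finset.coe_filter, Set.mem_setOf_eq] at h1 h2
      rw [← h1.2, ← h2.2]
      simp only at hfg
      rw [hfg]
    have hle := Finset.card_le_card_of_injOn (fun G => (order G).foldl (ins s) (init s))
        (fun G _ => Finset.mem_univ _) hinj
    rw [Finset.card_univ] at hle
    have : (T.filter (fun G => query s ((order G).foldl (ins s) (init s)) = G)).card ≤ 2 ^ S :=
      le_trans hle hcard
    calc ((T.filter (fun G => query s ((order G).foldl (ins s) (init s)) = G)).card : ℝ)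
        ≤ ((2 ^ S : ℕ) : ℝ) := by exact_mod_cast this
      _ = (2 : ℝ) ^ S := by push_cast; ring
  have main : ε * (n : ℝ) ^ (n - 2) ≤ (2 : ℝ) ^ S := by
    have h1 : ε * (T.card : ℝ)
        ≤ ∑ G ∈ T, ∑ s ∈ Finset.univ.filter
            (fun s => query s ((order G).foldl (ins s) (init s)) = G), q s := by
      calc ε * (T.card : ℝ) = ∑ _G ∈ T, ε := by rw [Finset.sum_const, nsmul_eq_mul, mul_comm]
        _ ≤ _ := Finset.sum_le_sum fun G hG => hcorrect G (htree G hG)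
    have h2 : (∑ G ∈ T, ∑ s ∈ Finset.univ.filter
            (fun s => query s ((order G).foldl (ins s) (init s)) = G), q s)
        = ∑ s : Seed,
            ((T.filter (fun G => query s ((order G).foldl (ins s) (init s)) = G)).card : ℝ)
              * q s := by
      simp_rw [Finset.sum_filter]
      rw [Finset.sum_comm]
      refine Finset.sum_congr rfl fun s _ => ?_
      rw [← Finset.sum_filter, Finset.sum_const, nsmul_eq_mul]
    have h3 : (∑ s : Seed,
            ((T.filter (fun G => query s ((order G).foldl (ins s) (init s)) = G)).card : ℝ)
              * q s) ≤ ∑ s : Seed, (2 : ℝ) ^ S * q s :=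
      Finset.sum_le_sum fun s _ => mul_le_mul_of_nonneg_right (key s) (hq0 s)
    have h4 : (∑ s : Seed, (2 : ℝ) ^ S * q s) = (2 : ℝ) ^ S := by
      rw [← Finset.mul_sum, hq1, mul_one]
    have h5 := le_trans h1 (le_of_eq h2)
    have h6 := le_trans h5 (le_trans h3 (le_of_eq h4))
    calc ε * (n : ℝ) ^ (n - 2) = ε * (T.card : ℝ) := by rw [hTcard]; push_cast; ring
      _ ≤ (2 : ℝ) ^ S := h6
  -- take logs
  have hnpos : (0 : ℝ) < (n : ℝ) := by
    have : 0 < n := by omega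
    exact_mod_cast this
  have hP : (0 : ℝ) < ε * (n : ℝ) ^ (n - 2) := by positivity
  have h5 : Real.logb 2 (ε * (n : ℝ) ^ (n - 2)) ≤ Real.logb 2 ((2 : ℝ) ^ S) :=
    Real.logb_le_logb_of_le (by norm_num) hP main
  rw [Real.logb_mul (ne_of_gt hε) (by positivity), Real.logb_pow, Real.logb_pow,
    Real.logb_self_eq_one (by norm_num), mul_one] at h5
  have hcast : ((n - 2 : ℕ) : ℝ) = (n : ℝ) - 2 := by
    push_cast [hn]
    ring
  rw [one_div, Real.logb_inv]
  rw [hcast] at h5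
  linarith
end

section
/- Let μ' and μ be joint distributions of a pair (S, T) on finite sets, where for each t the conditional μ[S | T = t] is uniform on a set of size N_t. Then the mutual information of S and T under μ' satisfies I_{μ'}(S; T) ≤ H_{μ'}(S) − E_{t∼μ'[T]} log N_t + E_{t∼μ'[T]} D_KL(μ'[S|T=t] || μ[S|T=t]). -/
open Finset
open scoped Classical

/-- Let `μ'` and `μ` be joint distributions of a pair `(S, T)` on finite sets, where for each
`t` the conditional `μ[S | T = t]` is uniform on a set of size `N t`, and the support of
`μ'[S|T=t]` lies within that of `μ[S|T=t]`. Then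
`I_{μ'}(S;T) ≤ H_{μ'}(S) − E_{t∼μ'[T]} log N_t + E_{t∼μ'[T]} D_KL(μ'[S|T=t] ‖ μ[S|T=t])`
(base-2 logs). -/
theorem mutualInfo_le_of_uniform_conditionals {σ τ : Type*} [Fintype σ] [Fintype τ]
    (μ' μ : σ × τ → ℝ)
    (hμ'0 : ∀ x, 0 ≤ μ' x) (hμ'1 : ∑ x, μ' x = 1)
    (hμ0 : ∀ x, 0 ≤ μ x) (hμ1 : ∑ x, μ x = 1)
    (N : τ → ℕ)
    (hsupp : ∀ s t, 0 < μ' (s, t) → 0 < μ (s, t))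
    (hcard : ∀ t, (Finset.univ.filter (fun s => 0 < μ (s, t))).card = N t)
    (hunif : ∀ t s, 0 < μ (s, t) → μ (s, t) * N t = ∑ s', μ (s', t)) :
    (∑ s, ∑ t, μ' (s, t) *
        Real.logb 2 (μ' (s, t) / ((∑ t', μ' (s, t')) * (∑ s', μ' (s', t))))) ≤
      (-∑ s, (∑ t', μ' (s, t')) * Real.logb 2 (∑ t', μ' (s, t')))
        - (∑ t, (∑ s', μ' (s', t)) * Real.logb 2 (N t))
        + ∑ t, (∑ s', μ' (s', t)) *
            (∑ s, (μ' (s, t) / (∑ s', μ' (s', t))) *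
              Real.logb 2
                ((μ' (s, t) / (∑ s', μ' (s', t))) / (μ (s, t) / (∑ s', μ (s', t))))) := by
  apply le_of_eq
  -- per-term identity
  have key : ∀ s t,
      μ' (s, t) * Real.logb 2 (μ' (s, t) / ((∑ t', μ' (s, t')) * (∑ s', μ' (s', t))))
      = -(μ' (s, t) * Real.logb 2 (∑ t', μ' (s, t')))
        - μ' (s, t) * Real.logb 2 (N t)
        + μ' (s, t) * Real.logb 2
            ((μ' (s, t) / (∑ s', μ' (s', t))) / (μ (s, t) / (∑ s', μ (s', t)))) := by
    intro s t
    rcases eq_or_lt_of_le (hμ'0 (s, t)) with h0 | hpos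
    · simp [← h0]
    · have hμpos := hsupp s t hpos
      have hp : 0 < ∑ t', μ' (s, t') :=
        lt_of_lt_of_le hpos (Finset.single_le_sum (fun t' _ => hμ'0 (s, t')) (Finset.mem_univ t))
      have hq : 0 < ∑ s', μ' (s', t) :=
        lt_of_lt_of_le hpos (Finset.single_le_sum (fun s' _ => hμ'0 (s', t)) (Finset.mem_univ s))
      have hm : 0 < ∑ s', μ (s', t) :=
        lt_of_lt_of_le hμpos (Finset.single_le_sum (fun s' _ => hμ0 (s', t)) (Finset.mem_univ s))
      have hu := hunif t s hμpos
      have hN : 0 < (N t : ℝ) := by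
        rcases Nat.eq_zero_or_pos (N t) with h | h
        · exfalso; rw [h] at hu; simp at hu; linarith
        · exact_mod_cast h
      have hlogμ : Real.logb 2 (μ (s, t)) = Real.logb 2 (∑ s', μ (s', t)) - Real.logb 2 (N t) := by
        have hμeq : μ (s, t) = (∑ s', μ (s', t)) / N t := by
          field_simp
          linarith [hu]
        rw [hμeq, Real.logb_div hm.ne' hN.ne']
      rw [Real.logb_div hpos.ne' (mul_pos hp hq).ne', Real.logb_mul hp.ne' hq.ne',
          Real.logb_div (div_pos hpos hq).ne' (div_pos hμpos hm).ne',
          Real.logb_div hpos.ne' hq.ne', Real.logb_div hμpos.ne' hm.ne', hlogμ]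
      ring
  -- rewrite first RHS term as a double sum
  have hterm1 : ∀ s : σ, (∑ t', μ' (s, t')) * Real.logb 2 (∑ t', μ' (s, t'))
      = ∑ t, μ' (s, t) * Real.logb 2 (∑ t', μ' (s, t')) := by
    intro s; rw [Finset.sum_mul]
  -- rewrite second RHS term
  have hterm2 : ∀ t : τ, (∑ s', μ' (s', t)) * Real.logb 2 (N t)
      = ∑ s, μ' (s, t) * Real.logb 2 (N t) := by
    intro t; rw [Finset.sum_mul]
  -- rewrite third RHS term
  have hterm3 : ∀ t : τ, (∑ s', μ' (s', t)) *
      (∑ s, (μ' (s, t) / (∑ s', μ' (s', t))) *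
        Real.logb 2 ((μ' (s, t) / (∑ s', μ' (s', t))) / (μ (s, t) / (∑ s', μ (s', t)))))
      = ∑ s, μ' (s, t) *
          Real.logb 2 ((μ' (s, t) / (∑ s', μ' (s', t))) / (μ (s, t) / (∑ s', μ (s', t)))) := by
    intro t
    rw [Finset.mul_sum]
    refine Finset.sum_congr rfl fun s _ => ?_
    by_cases hq : (∑ s', μ' (s', t)) = 0
    · have h0 : μ' (s, t) = 0 :=
        (Finset.sum_eq_zero_iff_of_nonneg (fun s' _ => hμ'0 (s', t))).mp hq s (Finset.mem_univ s)
      simp [h0]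
    · field_simp
  simp only [hterm1, hterm2, hterm3]
  rw [show (∑ t, ∑ s, μ' (s, t) * Real.logb 2 (N t))
      = ∑ s, ∑ t, μ' (s, t) * Real.logb 2 (N t) from Finset.sum_comm,
    show (∑ t, ∑ s, μ' (s, t) *
        Real.logb 2 ((μ' (s, t) / (∑ s', μ' (s', t))) / (μ (s, t) / (∑ s', μ (s', t)))))
      = ∑ s, ∑ t, μ' (s, t) *
        Real.logb 2 ((μ' (s, t) / (∑ s', μ' (s', t))) / (μ (s, t) / (∑ s', μ (s', t))))
      from Finset.sum_comm,
    ← Finset.sum_neg_distrib, ← Finset.sum_sub_distrib, ← Finset.sum_add_distrib]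
  refine Finset.sum_congr rfl fun s _ => ?_
  rw [← Finset.sum_neg_distrib, ← Finset.sum_sub_distrib, ← Finset.sum_add_distrib]
  exact Finset.sum_congr rfl fun t _ => key s t
end

section
/- Consider the process: fix a set S of size m, set T initially a uniformly random subset of S of size r_{i_0}, and in rounds j = i_0, …, i−1, add to T either a uniformly random subset of S∖T of size r_{j+1} − r_j, or a uniformly random subset of S∖T of size r_{j+1} − r_j conditioned on containing one fixed element x_j ∈ S∖T. Then for every round i and every set T' ⊆ S of size r_i, Pr(T = T') ≤ (1/C(m, r_i)) · ∏_{j=i_0}^{i−1} (m − r_j)/(r_i − r_j). -/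
open Finset

/-- One round of the process: from a current set `T` of size `r j` (a subset of `S`),
add a uniformly random subset of `S ∖ T` of size `r(j+1) − r j`, either unconstrained
(when `forced T = none`) or conditioned on containing a fixed element `x ∈ S ∖ T`
(when `forced T = some x`). This maps a distribution `P` on subsets to the distribution
after the round. -/
noncomputable def stepP {V : Type*} [DecidableEq V] (S : Finset V) (rj rj1 : ℕ)
    (forced : Finset V → Option V) (P : Finset V → ℝ) : Finset V → ℝ :=
  fun T' => ∑ T ∈ S.powerset,
    P T *
      (match forced T with
        | none =>
            if T ⊆ T' ∧ T' ⊆ S ∧ T.card = rj ∧ T'.card = rj1 then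
              (1 : ℝ) / ((S.card - rj).choose (rj1 - rj)) else 0
        | some x =>
            if T ⊆ T' ∧ T' ⊆ S ∧ T.card = rj ∧ T'.card = rj1 ∧ x ∈ T' then
              (1 : ℝ) / ((S.card - rj - 1).choose (rj1 - rj - 1)) else 0)

/-- The distribution of the evolving set `T` after `k` rounds, starting at round `i0` from a
uniformly random subset of `S` of size `r i0`. -/
noncomputable def procP {V : Type*} [DecidableEq V] (S : Finset V) (r : ℕ → ℕ) (i0 : ℕ)
    (forced : ℕ → Finset V → Option V) : ℕ → Finset V → ℝ
  | 0 => fun T => if T ⊆ S ∧ T.card = r i0 then (1 : ℝ) / (S.card.choose (r i0)) else 0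
  | (k + 1) =>
      stepP S (r (i0 + k)) (r (i0 + k + 1)) (forced (i0 + k)) (procP S r i0 forced k)


lemma card_filter_between_le {V : Type*} [DecidableEq V] (Q P : Finset V) (b : ℕ)
    (cond : Finset V → Prop) [DecidablePred cond]
    (hcond : ∀ U, cond U → P ⊆ U ∧ U.card = b) :
    (Q.powerset.filter cond).card ≤ (Q.card - P.card).choose (b - P.card) := by
  by_cases hPQ : P ⊆ Q
  · have hinj : (Q.powerset.filter cond).card ≤ ((Q \ P).powersetCard (b - P.card)).card := by
      apply Finset.card_le_card_of_injOn (fun U => U \ P)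
      · intro U hU
        simp only [Finset.mem_coe, Finset.mem_filter, Finset.mem_powerset] at hU
        obtain ⟨hPU, hUb⟩ := hcond U hU.2
        rw [Finset.mem_coe, Finset.mem_powersetCard]
        exact ⟨Finset.sdiff_subset_sdiff hU.1 (Finset.Subset.refl P),
          by rw [Finset.card_sdiff_of_subset hPU, hUb]⟩
      · intro U1 h1 U2 h2 h
        simp only [Finset.coe_filter, Set.mem_setOf_eq, Finset.mem_powerset] at h1 h2
        have p1 := (hcond _ h1.2).1
        have p2 := (hcond _ h2.2).1
        simp only [] at h
        rw [← Finset.sdiff_union_of_subset p1, ← Finset.sdiff_union_of_subset p2, h]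
    rwa [Finset.card_powersetCard, Finset.card_sdiff_of_subset hPQ] at hinj
  · have hempty : Q.powerset.filter cond = ∅ := by
      rw [Finset.filter_eq_empty_iff]
      intro U hU hc
      exact hPQ ((hcond U hc).1.trans (Finset.mem_powerset.mp hU))
    simp [hempty]

lemma sum_ite_powerset_le {V : Type*} [DecidableEq V] (Q P : Finset V) (b : ℕ)
    (c : ℝ) (hc : 0 ≤ c) (cond : Finset V → Prop) [DecidablePred cond]
    (hcond : ∀ U, cond U → P ⊆ U ∧ U.card = b) :
    ∑ U ∈ Q.powerset, (if cond U then c else 0)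
      ≤ ((Q.card - P.card).choose (b - P.card) : ℝ) * c := by
  rw [← Finset.sum_filter, Finset.sum_const, nsmul_eq_mul]
  exact mul_le_mul_of_nonneg_right
    (by exact_mod_cast card_filter_between_le Q P b cond hcond) hc

lemma step_sum_le {V : Type*} [DecidableEq V] (S : Finset V) (m : ℕ) (hm : S.card = m)
    (a b ri : ℕ) (hab : a < b) (hbi : b ≤ ri) (him : ri ≤ m)
    (forced : Finset V → Option V)
    (hforced : ∀ T x, forced T = some x → x ∈ S \ T)
    (P : Finset V → ℝ) (hP : ∀ T, 0 ≤ P T)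
    (T' : Finset V) (hT'S : T' ⊆ S) (hT' : T'.card = ri) :
    ∑ U ∈ T'.powerset, stepP S a b forced P U ≤
      (((ri - a).choose (b - a) : ℝ) / ((m - a).choose (b - a)) *
        (((m : ℝ) - a) / ((ri : ℝ) - a))) * ∑ T ∈ T'.powerset, P T := by
  have hai : a < ri := lt_of_lt_of_le hab hbi
  have ham : a < m := lt_of_lt_of_le hai him
  have hdm : b - a ≤ m - a := by omega
  have hdr : b - a ≤ ri - a := by omega
  have hchoose_m : 0 < (m - a).choose (b - a) := Nat.choose_pos hdm
  have hchoose_m1 : 0 < (m - a - 1).choose (b - a - 1) := Nat.choose_pos (by omega)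
  have hria : (0:ℝ) < (ri:ℝ) - a := by
    have : (a:ℝ) < ri := by exact_mod_cast hai
    linarith
  have hma : (0:ℝ) < (m:ℝ) - a := by
    have : (a:ℝ) < m := by exact_mod_cast ham
    linarith
  have hrm : (ri:ℝ) ≤ (m:ℝ) := by exact_mod_cast him
  set ρ : ℝ := ((ri - a).choose (b - a) : ℝ) / ((m - a).choose (b - a)) *
        (((m : ℝ) - a) / ((ri : ℝ) - a)) with hρdef
  have hρ0 : 0 ≤ ρ := by positivity
  simp only [stepP]
  rw [Finset.sum_comm]
  refine le_trans (Finset.sum_le_sum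
      (g := fun T => if T ⊆ T' then ρ * P T else 0) (fun T hT => ?_)) ?_
  · rw [← Finset.mul_sum]
    show _ ≤ if T ⊆ T' then ρ * P T else 0
    by_cases hTT' : T ⊆ T'
    · rw [if_pos hTT', mul_comm ρ (P T)]
      refine mul_le_mul_of_nonneg_left ?_ (hP T)
      by_cases hTa : T.card = a
      · rcases hf : forced T with _ | x
        · show (∑ U ∈ T'.powerset, if T ⊆ U ∧ U ⊆ S ∧ T.card = a ∧ U.card = b then
              (1 : ℝ) / ((S.card - a).choose (b - a)) else 0) ≤ ρ
          refine le_trans (sum_ite_powerset_le T' T b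
            ((1:ℝ)/((S.card - a).choose (b - a))) (by positivity) _
            (fun U h => ⟨h.1, h.2.2.2⟩)) ?_
          rw [hT', hTa, hm, mul_one_div, hρdef]
          exact le_mul_of_one_le_right (by positivity)
            ((one_le_div hria).mpr (by linarith))
        · obtain ⟨hxS, hxT⟩ := Finset.mem_sdiff.mp (hforced T x hf)
          show (∑ U ∈ T'.powerset, if T ⊆ U ∧ U ⊆ S ∧ T.card = a ∧ U.card = b ∧ x ∈ U then
              (1 : ℝ) / ((S.card - a - 1).choose (b - a - 1)) else 0) ≤ ρ
          refine le_trans (sum_ite_powerset_le T' (insert x T) b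
            ((1:ℝ)/((S.card - a - 1).choose (b - a - 1))) (by positivity) _
            (fun U h => ⟨Finset.insert_subset h.2.2.2.2 h.1, h.2.2.2.1⟩)) ?_
          rw [hT', Finset.card_insert_of_notMem hxT, hTa, hm, mul_one_div, hρdef]
          have e₁ : ri - (a + 1) = ri - a - 1 := by omega
          have e₂ : b - (a + 1) = b - a - 1 := by omega
          rw [e₁, e₂, div_mul_div_comm, div_le_div_iff₀ (by positivity) (by positivity)]
          have i1 : (ri - a) * (ri - a - 1).choose (b - a - 1) = (ri - a).choose (b - a) * (b - a) := by
            have h := Nat.add_one_mul_choose_eq (ri - a - 1) (b - a - 1)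
            rw [show ri - a - 1 + 1 = ri - a by omega, show b - a - 1 + 1 = b - a by omega] at h
            exact h
          have i2 : (m - a) * (m - a - 1).choose (b - a - 1) = (m - a).choose (b - a) * (b - a) := by
            have h := Nat.add_one_mul_choose_eq (m - a - 1) (b - a - 1)
            rw [show m - a - 1 + 1 = m - a by omega, show b - a - 1 + 1 = b - a by omega] at h
            exact h
          have cr : ((ri - a : ℕ) : ℝ) = (ri:ℝ) - (a:ℝ) := by
            exact_mod_cast Nat.cast_sub hai.le
          have cm : ((m - a : ℕ) : ℝ) = (m:ℝ) - (a:ℝ) := by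
            exact_mod_cast Nat.cast_sub ham.le
          rw [← cr, ← cm]
          have hnat : (ri - a - 1).choose (b - a - 1) * ((m - a).choose (b - a) * (ri - a))
              = (ri - a).choose (b - a) * ((m - a):ℕ) * ((m - a - 1).choose (b - a - 1)) := by
            calc (ri - a - 1).choose (b - a - 1) * ((m - a).choose (b - a) * (ri - a))
                = (m - a).choose (b - a) * ((ri - a) * (ri - a - 1).choose (b - a - 1)) := by ring
              _ = (m - a).choose (b - a) * ((ri - a).choose (b - a) * (b - a)) := by rw [i1]
              _ = (ri - a).choose (b - a) * ((m - a) * (m - a - 1).choose (b - a - 1)) := by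
                    rw [i2]; ring
              _ = _ := by ring
          exact_mod_cast le_of_eq hnat
      · have hz : (∑ U ∈ T'.powerset, (match forced T with
            | none => if T ⊆ U ∧ U ⊆ S ∧ T.card = a ∧ U.card = b then
                (1 : ℝ) / ((S.card - a).choose (b - a)) else 0
            | some x => if T ⊆ U ∧ U ⊆ S ∧ T.card = a ∧ U.card = b ∧ x ∈ U then
                (1 : ℝ) / ((S.card - a - 1).choose (b - a - 1)) else 0)) = 0 := by
          apply Finset.sum_eq_zero
          intro U hU
          rcases forced T with _ | x
          · exact if_neg (fun h => hTa h.2.2.1)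
          · exact if_neg (fun h => hTa h.2.2.1)
        rw [hz]
        exact hρ0
    · rw [if_neg hTT']
      have hz : (∑ U ∈ T'.powerset, (match forced T with
          | none => if T ⊆ U ∧ U ⊆ S ∧ T.card = a ∧ U.card = b then
              (1 : ℝ) / ((S.card - a).choose (b - a)) else 0
          | some x => if T ⊆ U ∧ U ⊆ S ∧ T.card = a ∧ U.card = b ∧ x ∈ U then
              (1 : ℝ) / ((S.card - a - 1).choose (b - a - 1)) else 0)) = 0 := by
        apply Finset.sum_eq_zero
        intro U hU
        have hUT' := Finset.mem_powerset.mp hU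
        rcases forced T with _ | x
        · exact if_neg (fun h => hTT' (h.1.trans hUT'))
        · exact if_neg (fun h => hTT' (h.1.trans hUT'))
      rw [hz, mul_zero]
  · rw [← Finset.sum_filter]
    have hfil : S.powerset.filter (fun T => T ⊆ T') = T'.powerset := by
      ext U
      simp only [Finset.mem_filter, Finset.mem_powerset]
      exact ⟨fun h => h.2, fun h => ⟨h.trans hT'S, h⟩⟩
    rw [hfil, ← Finset.mul_sum]

lemma procP_nonneg {V : Type*} [DecidableEq V] (S : Finset V) (r : ℕ → ℕ) (i0 : ℕ)
    (forced : ℕ → Finset V → Option V) : ∀ k T, 0 ≤ procP S r i0 forced k T := by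
  intro k
  induction k with
  | zero =>
      intro T
      simp only [procP]
      split <;> positivity
  | succ k ih =>
      intro T
      simp only [procP, stepP]
      apply Finset.sum_nonneg
      intro T₀ _
      apply mul_nonneg (ih T₀)
      rcases forced (i0 + k) T₀ with _ | x
      · split <;> positivity
      · split <;> positivity


/-- For every round `i ≥ i0` and every `T' ⊆ S` of size `r i`,
`Pr(T = T') ≤ (1/C(m, r i)) · ∏_{j=i0}^{i−1} (m − r j)/(r i − r j)`, where `m = |S|`. -/
theorem procP_le {V : Type*} [DecidableEq V] (S : Finset V) (m : ℕ) (hm : S.card = m)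
    (r : ℕ → ℕ) (hr : StrictMono r) (i0 i : ℕ) (hi : i0 ≤ i) (hri : r i ≤ m)
    (forced : ℕ → Finset V → Option V)
    (hforced : ∀ j T x, forced j T = some x → x ∈ S \ T)
    (T' : Finset V) (hT'S : T' ⊆ S) (hT' : T'.card = r i) :
    procP S r i0 forced (i - i0) T' ≤
      (1 / (m.choose (r i) : ℝ)) *
        ∏ j ∈ Finset.Ico i0 i, ((m : ℝ) - r j) / ((r i : ℝ) - r j) := by
  have key : ∀ k, i0 + k ≤ i →
      ∑ U ∈ T'.powerset, procP S r i0 forced k U ≤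
        ((r i).choose (r (i0 + k)) : ℝ) / (m.choose (r (i0 + k))) *
          ∏ j ∈ Finset.Ico i0 (i0 + k), ((m : ℝ) - r j) / ((r i : ℝ) - r j) := by
    intro k
    induction k with
    | zero =>
        intro _
        simp only [procP, Nat.add_zero, Finset.Ico_self, Finset.prod_empty, mul_one]
        have hb := sum_ite_powerset_le T' ∅ (r i0) ((1:ℝ)/(S.card.choose (r i0)))
          (by positivity) _ (fun U (h : U ⊆ S ∧ U.card = r i0) => ⟨Finset.empty_subset U, h.2⟩)
        simp only [Finset.card_empty, Nat.sub_zero, hT', hm, mul_one_div] at hb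
        simp only [hm]
        exact hb
    | succ k ih =>
        intro hk1
        have hk : i0 + k ≤ i := by omega
        have ha_lt_b : r (i0+k) < r (i0+k+1) := hr (Nat.lt_succ_self _)
        have hb_le : r (i0+k+1) ≤ r i := hr.monotone hk1
        set a := r (i0+k) with hadef
        set b := r (i0+k+1) with hbdef
        have hai : a < r i := lt_of_lt_of_le ha_lt_b hb_le
        have ham : a < m := lt_of_lt_of_le hai hri
        have hstep := step_sum_le S m hm a b (r i) ha_lt_b hb_le hri
          (forced (i0+k)) (fun T x h => hforced (i0+k) T x h)
          (procP S r i0 forced k) (procP_nonneg S r i0 forced k) T' hT'S hT'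
        have heq : ∑ U ∈ T'.powerset, procP S r i0 forced (k+1) U
            = ∑ U ∈ T'.powerset,
                stepP S a b (forced (i0+k)) (procP S r i0 forced k) U := by
          simp only [procP]
          rfl
        rw [heq]
        refine le_trans hstep ?_
        have hρ0 : (0:ℝ) ≤ ((r i - a).choose (b - a) : ℝ) / ((m - a).choose (b - a)) *
            (((m : ℝ) - a) / ((r i : ℝ) - a)) := by
          have h1 : (a:ℝ) < m := by exact_mod_cast ham
          have h2 : (a:ℝ) < r i := by exact_mod_cast hai
          exact mul_nonneg (by positivity) (div_nonneg (by linarith) (by linarith))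
        refine le_trans (mul_le_mul_of_nonneg_left (ih hk) hρ0) ?_
        apply le_of_eq
        rw [show i0 + (k+1) = (i0 + k) + 1 by omega,
          Finset.prod_Ico_succ_top (by omega : i0 ≤ i0 + k)]
        have hchooseid : ((r i - a).choose (b - a) : ℝ) / ((m - a).choose (b - a)) *
            (((r i).choose a : ℝ) / (m.choose a)) = ((r i).choose b : ℝ) / (m.choose b) := by
          have hpos1 : (0:ℝ) < ((m - a).choose (b - a) : ℝ) := by
            exact_mod_cast Nat.choose_pos (by omega)
          have hpos2 : (0:ℝ) < (m.choose a : ℝ) := by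
            exact_mod_cast Nat.choose_pos (by omega)
          have hpos3 : (0:ℝ) < (m.choose b : ℝ) := by
            exact_mod_cast Nat.choose_pos (by omega)
          rw [div_mul_div_comm, div_eq_div_iff (mul_pos hpos1 hpos2).ne' hpos3.ne']
          have n1 : (r i).choose b * b.choose a = (r i).choose a * (r i - a).choose (b - a) :=
            Nat.choose_mul ha_lt_b.le
          have n2 : m.choose b * b.choose a = m.choose a * (m - a).choose (b - a) :=
            Nat.choose_mul ha_lt_b.le
          have hnat : (r i - a).choose (b - a) * (r i).choose a * m.choose b * b.choose a
              = (r i).choose b * (m.choose a * (m - a).choose (b - a)) * b.choose a := by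
            calc (r i - a).choose (b - a) * (r i).choose a * m.choose b * b.choose a
                = ((r i).choose a * (r i - a).choose (b - a)) * m.choose b * b.choose a := by ring
              _ = ((r i).choose b * b.choose a) * m.choose b * b.choose a := by rw [← n1]
              _ = ((r i).choose b) * (m.choose b * b.choose a) * b.choose a := by ring
              _ = ((r i).choose b) * (m.choose a * (m - a).choose (b - a)) * b.choose a := by
                    rw [n2]
          have hba : 0 < b.choose a := Nat.choose_pos ha_lt_b.le
          have h3 := Nat.eq_of_mul_eq_mul_right hba hnat
          have h4 : (r i - a).choose (b - a) * (r i).choose a * m.choose b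
              = (r i).choose b * ((m - a).choose (b - a) * m.choose a) := by rw [h3]; ring
          exact_mod_cast h4
        rw [← hchooseid]
        ring
  have h2 := key (i - i0) (by omega)
  rw [Nat.add_sub_cancel' hi] at h2
  refine le_trans (Finset.single_le_sum
    (fun U _ => procP_nonneg S r i0 forced (i - i0) U)
    (Finset.mem_powerset_self T')) (le_trans h2 ?_)
  rw [Nat.choose_self]
  norm_num
end

section
/- Let each round independently be 'bad' with probability at most 3δ'. With R = ⌈log_{3/2} n⌉ + max{⌈log_{3/2} n⌉, log(2/δ)/log(1/(6eδ'))} rounds and δ' ≤ 1/(6e), the probability of having fewer than ⌈log_{3/2} n⌉ good rounds is at most δ/2. -/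
open Finset
open scoped Classical

/-- Each of `R` mutually independent rounds is 'bad' with probability at most `3δ'`.
With `L = ⌈log_{3/2} n⌉` and `R ≥ L + max{L, log(2/δ)/log(1/(6eδ'))}` (the second
condition encoded without division as `L ≤ R − L` and
`log(2/δ) ≤ (R − L)·log(1/(6eδ'))`), and `δ' ≤ 1/(6e)`, the probability of having fewer
than `L` good rounds is at most `δ/2`. -/
theorem few_good_rounds_prob_le {Ω : Type*} [Fintype Ω]
    (p : Ω → ℝ) (hp0 : ∀ ω, 0 ≤ p ω) (hp1 : ∑ ω, p ω = 1)
    (n : ℕ) (hn : 2 ≤ n) (δ δ' : ℝ) (hδ0 : 0 < δ) (hδ1 : δ < 1)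
    (hδ'0 : 0 < δ') (hδ' : δ' ≤ 1 / (6 * Real.exp 1))
    (R : ℕ) (Bad : Fin R → Finset Ω)
    (hindep : ∀ T : Finset (Fin R),
      (∑ ω ∈ Finset.univ.filter (fun ω => ∀ i ∈ T, ω ∈ Bad i), p ω) =
        ∏ i ∈ T, ∑ ω ∈ Bad i, p ω)
    (hbad : ∀ i, (∑ ω ∈ Bad i, p ω) ≤ 3 * δ')
    (hR1 : (⌈Real.logb (3 / 2) n⌉₊ : ℝ) ≤ (R : ℝ) - ⌈Real.logb (3 / 2) n⌉₊)
    (hR2 : Real.log (2 / δ) ≤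
      ((R : ℝ) - ⌈Real.logb (3 / 2) n⌉₊) * Real.log (1 / (6 * Real.exp 1 * δ'))) :
    (∑ ω ∈ Finset.univ.filter
        (fun ω =>
          (Finset.univ.filter (fun i : Fin R => ω ∉ Bad i)).card <
            ⌈Real.logb (3 / 2) n⌉₊), p ω) ≤ δ / 2 := by
  set L := ⌈Real.logb (3 / 2) n⌉₊ with hLdef
  have hLR2 : 2 * L ≤ R := by
    have : (2 * L : ℝ) ≤ (R : ℝ) := by push_cast; linarith
    exact_mod_cast this
  set k := R - L with hkdef
  have hLR : L ≤ R := by omega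
  have hLk : L ≤ k := by omega
  have hRk : R ≤ 2 * k := by omega
  have hkcast : (k : ℝ) = (R : ℝ) - L := by
    rw [hkdef]; push_cast [Nat.cast_sub hLR]; ring
  set P := Finset.powersetCard k (Finset.univ : Finset (Fin R)) with hPdef
  -- Step 1: union bound
  have step1 : (∑ ω ∈ Finset.univ.filter
        (fun ω => (Finset.univ.filter (fun i : Fin R => ω ∉ Bad i)).card < L), p ω)
      ≤ ∑ T ∈ P, ∑ ω ∈ Finset.univ.filter (fun ω => ∀ i ∈ T, ω ∈ Bad i), p ω := by
    have hrw : ∑ T ∈ P, ∑ ω ∈ Finset.univ.filter (fun ω => ∀ i ∈ T, ω ∈ Bad i), p ω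
        = ∑ ω : Ω, ((P.filter (fun T => ∀ i ∈ T, ω ∈ Bad i)).card : ℝ) * p ω := by
      simp_rw [Finset.sum_filter]
      rw [Finset.sum_comm]
      congr 1
      ext ω
      rw [← Finset.sum_filter, Finset.sum_const, nsmul_eq_mul]
    rw [hrw]
    calc (∑ ω ∈ Finset.univ.filter
        (fun ω => (Finset.univ.filter (fun i : Fin R => ω ∉ Bad i)).card < L), p ω)
        ≤ ∑ ω ∈ Finset.univ.filter
            (fun ω => (Finset.univ.filter (fun i : Fin R => ω ∉ Bad i)).card < L),
            ((P.filter (fun T => ∀ i ∈ T, ω ∈ Bad i)).card : ℝ) * p ω := by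
          apply Finset.sum_le_sum
          intro ω hω
          rw [Finset.mem_filter] at hω
          have hgood : (Finset.univ.filter (fun i : Fin R => ω ∉ Bad i)).card < L := hω.2
          have hsum : (Finset.univ.filter (fun i : Fin R => ω ∈ Bad i)).card
              + (Finset.univ.filter (fun i : Fin R => ω ∉ Bad i)).card
              = Fintype.card (Fin R) :=
            Finset.card_filter_add_card_filter_not (fun i => ω ∈ Bad i)
          rw [Fintype.card_fin] at hsum
          have hbc : k ≤ (Finset.univ.filter (fun i : Fin R => ω ∈ Bad i)).card := by omega
          obtain ⟨T, hTsub, hTcard⟩ := Finset.exists_subset_card_eq hbc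
          have hTmem : T ∈ P.filter (fun T => ∀ i ∈ T, ω ∈ Bad i) := by
            rw [Finset.mem_filter]
            refine ⟨Finset.mem_powersetCard.mpr ⟨Finset.subset_univ _, hTcard⟩, ?_⟩
            intro i hi
            exact (Finset.mem_filter.mp (hTsub hi)).2
          have h1 : 1 ≤ ((P.filter (fun T => ∀ i ∈ T, ω ∈ Bad i)).card : ℝ) := by
            exact_mod_cast Finset.card_pos.mpr ⟨T, hTmem⟩
          nlinarith [hp0 ω]
      _ ≤ ∑ ω : Ω, ((P.filter (fun T => ∀ i ∈ T, ω ∈ Bad i)).card : ℝ) * p ω := by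
          apply Finset.sum_le_sum_of_subset_of_nonneg (Finset.filter_subset _ _)
          intro ω _ _
          exact mul_nonneg (Nat.cast_nonneg _) (hp0 ω)
  -- Step 2: each term ≤ (3δ')^k
  have step2 : ∑ T ∈ P, ∑ ω ∈ Finset.univ.filter (fun ω => ∀ i ∈ T, ω ∈ Bad i), p ω
      ≤ (R.choose k : ℝ) * (3 * δ') ^ k := by
    have : ∀ T ∈ P, (∑ ω ∈ Finset.univ.filter (fun ω => ∀ i ∈ T, ω ∈ Bad i), p ω)
        ≤ (3 * δ') ^ k := by
      intro T hT
      rw [hindep T]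
      have hTcard : T.card = k := (Finset.mem_powersetCard.mp hT).2
      calc (∏ i ∈ T, ∑ ω ∈ Bad i, p ω) ≤ ∏ _i ∈ T, (3 * δ') := by
            apply Finset.prod_le_prod
            · exact fun i _ => Finset.sum_nonneg (fun ω _ => hp0 ω)
            · exact fun i _ => hbad i
        _ = (3 * δ') ^ k := by rw [Finset.prod_const, hTcard]
    calc ∑ T ∈ P, ∑ ω ∈ Finset.univ.filter (fun ω => ∀ i ∈ T, ω ∈ Bad i), p ω
        ≤ ∑ _T ∈ P, (3 * δ') ^ k := Finset.sum_le_sum this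
      _ = (P.card : ℝ) * (3 * δ') ^ k := by rw [Finset.sum_const, nsmul_eq_mul]
      _ = (R.choose k : ℝ) * (3 * δ') ^ k := by
          rw [hPdef, Finset.card_powersetCard, Finset.card_univ, Fintype.card_fin]
  -- Step 3: numeric bound
  have he2 : (2 : ℝ) ≤ Real.exp 1 := by
    have := Real.add_one_le_exp (1 : ℝ)
    linarith
  have hchoose : (R.choose k : ℝ) ≤ 4 ^ k := by
    have h1 : R.choose k ≤ 2 ^ R := by
      rw [← Nat.sum_range_choose R]
      exact Finset.single_le_sum (f := fun m => R.choose m)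
        (fun i _ => Nat.zero_le _) (Finset.mem_range.mpr (by omega))
    have h2 : (2 : ℕ) ^ R ≤ 2 ^ (2 * k) := Nat.pow_le_pow_right (by norm_num) hRk
    have h3 : (2 : ℕ) ^ (2 * k) = 4 ^ k := by rw [pow_mul]; norm_num
    calc (R.choose k : ℝ) ≤ ((2 ^ R : ℕ) : ℝ) := by exact_mod_cast h1
      _ ≤ ((4 ^ k : ℕ) : ℝ) := by exact_mod_cast h2.trans_eq h3
      _ = 4 ^ k := by push_cast; ring
  have step3 : (R.choose k : ℝ) * (3 * δ') ^ k ≤ (6 * Real.exp 1 * δ') ^ k := by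
    calc (R.choose k : ℝ) * (3 * δ') ^ k ≤ 4 ^ k * (3 * δ') ^ k := by
          apply mul_le_mul_of_nonneg_right hchoose
          exact pow_nonneg (by linarith) k
      _ = (12 * δ') ^ k := by rw [← mul_pow]; ring_nf
      _ ≤ (6 * Real.exp 1 * δ') ^ k := by
          apply pow_le_pow_left₀ (by linarith) (by nlinarith)
  -- Step 4: (6eδ')^k ≤ δ/2
  have hx : (0 : ℝ) < 6 * Real.exp 1 * δ' := by positivity
  have step4 : (6 * Real.exp 1 * δ') ^ k ≤ δ / 2 := by
    have hlog1 : Real.log (1 / (6 * Real.exp 1 * δ')) = -Real.log (6 * Real.exp 1 * δ') := by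
      rw [one_div, Real.log_inv]
    have hlog2 : Real.log (2 / δ) = -Real.log (δ / 2) := by
      rw [Real.log_div (by norm_num) (ne_of_gt hδ0),
        Real.log_div (ne_of_gt hδ0) (by norm_num)]
      ring
    have key : (k : ℝ) * Real.log (6 * Real.exp 1 * δ') ≤ Real.log (δ / 2) := by
      rw [hlog1, hlog2] at hR2
      rw [hkcast]
      linarith
    have : (6 * Real.exp 1 * δ') ^ k = Real.exp ((k : ℝ) * Real.log (6 * Real.exp 1 * δ')) := by
      rw [Real.exp_nat_mul, Real.exp_log hx]
    rw [this]
    calc Real.exp ((k : ℝ) * Real.log (6 * Real.exp 1 * δ'))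
        ≤ Real.exp (Real.log (δ / 2)) := Real.exp_le_exp.mpr key
      _ = δ / 2 := Real.exp_log (by linarith)
  linarith [step1, step2, step3, step4]
end

section
/- In an iterative component-merging process starting with k non-maximal connected components, if in a round at most k/3 components fail to find an outgoing edge and every component that finds an outgoing edge is merged with another component, then after the round at most 2k/3 non-maximal components remain; consequently, after ⌈log_{3/2} n⌉ such 'good' rounds starting from at most n components, no non-maximal components remain. -/
/-- Iterative component merging: `k t` is the number of non-maximal connected components
after `t` rounds and `f t` the number of components failing to find an outgoing edge in
round `t`. If in every round at most `k t / 3` components fail and every component finding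
an outgoing edge is merged with another (so the successful ones at least halve in number,
i.e. `k (t+1) ≤ (k t − f t)/2 + f t`), then every round leaves at most `2 k t / 3`
non-maximal components, and after `⌈log_{3/2} n⌉` rounds starting from `k 0 ≤ n`
components, none remain. -/
theorem component_merging (n : ℕ) (hn : 2 ≤ n) (k f : ℕ → ℕ) (h0 : k 0 ≤ n)
    (hround : ∀ t, (f t : ℝ) ≤ (k t : ℝ) / 3 ∧
      (k (t + 1) : ℝ) ≤ ((k t : ℝ) - f t) / 2 + f t) :
    (∀ t, (k (t + 1) : ℝ) ≤ 2 * (k t : ℝ) / 3) ∧ k ⌈Real.logb (3 / 2) n⌉₊ = 0 := by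
  have hstep : ∀ t, (k (t + 1) : ℝ) ≤ 2 * (k t : ℝ) / 3 := by
    intro t
    obtain ⟨h1, h2⟩ := hround t
    linarith
  refine ⟨hstep, ?_⟩
  set T := ⌈Real.logb (3 / 2) n⌉₊ with hT
  have hn1 : (1 : ℝ) < (n : ℝ) := by exact_mod_cast Nat.lt_of_lt_of_le one_lt_two hn
  have hTpos : 1 ≤ T := by
    rw [hT, Nat.one_le_iff_ne_zero, ← Nat.pos_iff_ne_zero, Nat.ceil_pos]
    exact Real.logb_pos (by norm_num) hn1
  -- bound k t ≤ n * (2/3)^t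
  have hdecay : ∀ t, (k t : ℝ) ≤ (n : ℝ) * (2 / 3) ^ t := by
    intro t
    induction t with
    | zero => simpa using (by exact_mod_cast h0 : (k 0 : ℝ) ≤ (n : ℝ))
    | succ t ih =>
      calc (k (t + 1) : ℝ) ≤ 2 * (k t : ℝ) / 3 := hstep t
        _ ≤ 2 * ((n : ℝ) * (2 / 3) ^ t) / 3 := by linarith
        _ = (n : ℝ) * (2 / 3) ^ (t + 1) := by ring
  -- n ≤ (3/2)^T
  have hle : (n : ℝ) ≤ (3 / 2) ^ T := by
    have h1 : Real.logb (3 / 2) n ≤ (T : ℝ) := Nat.le_ceil _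
    have h2 : (n : ℝ) ≤ (3 / 2 : ℝ) ^ (T : ℝ) :=
      (Real.logb_le_iff_le_rpow (by norm_num : (1:ℝ) < 3/2)
        (by positivity : (0:ℝ) < (n:ℝ))).mp h1
    rwa [Real.rpow_natCast] at h2
  -- n ≠ (3/2)^T
  have hne : (n : ℝ) ≠ (3 / 2) ^ T := by
    intro heq
    have h3 : (n : ℝ) * 2 ^ T = 3 ^ T := by
      field_simp at heq
      rw [heq, div_pow]; field_simp
    have h4 : n * 2 ^ T = 3 ^ T := by exact_mod_cast h3
    have hdvd : 2 ∣ 3 ^ T := by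
      rw [← h4]
      exact Dvd.dvd.mul_left (dvd_pow_self 2 (by omega : T ≠ 0)) n
    have := Nat.Prime.dvd_of_dvd_pow Nat.prime_two hdvd
    omega
  have hlt : (n : ℝ) < (3 / 2) ^ T := lt_of_le_of_ne hle hne
  have hfin : (k T : ℝ) < 1 := by
    have h5 : (n : ℝ) * (2 / 3) ^ T < 1 := by
      have hp : (0 : ℝ) < (3 / 2) ^ T := by positivity
      have : (2 / 3 : ℝ) ^ T = ((3 / 2) ^ T)⁻¹ := by
        rw [← inv_pow]; norm_num
      rw [this]
      rw [mul_inv_lt_iff₀ hp, one_mul]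
      exact hlt
    exact lt_of_le_of_lt (hdecay T) h5
  have : k T < 1 := by exact_mod_cast hfin
  omega
end

section
/- If a Monte Carlo fully dynamic spanning forest data structure on 2n-node graphs uses C bits of memory and answers a spanning-forest query correctly with probability 1 − δ, then there is a one-way communication protocol for n-fold UR⊂ over universe [n] using C bits of communication with success probability 1 − δ. -/
open Finset
open scoped Classical

/-- `F` is a spanning forest of `G`: a subgraph of `G` that is acyclic and preserves
connectivity. -/
def IsSpanningForest {V : Type*} (G F : SimpleGraph V) : Prop :=
  F ≤ G ∧ F.IsAcyclic ∧ ∀ u v, G.Reachable u v → F.Reachable u v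

/-- The graph determined by a sequence of edge insertions (`true`) and deletions (`false`). -/
noncomputable def graphOfUpdates {V : Type*} [DecidableEq V]
    (l : List (Sym2 V × Bool)) : SimpleGraph V :=
  SimpleGraph.fromEdgeSet
    ↑(l.foldl (fun E e => if e.2 then insert e.1 E else E.erase e.1) (∅ : Finset (Sym2 V)))

namespace URred

variable {n : ℕ}

def elemV (x : Fin n) : Fin (2 * n) := ⟨x.1, by have := x.isLt; omega⟩
def idxV (i : Fin n) : Fin (2 * n) := ⟨n + i.1, by have := i.isLt; omega⟩

lemma elemV_ne_idxV (x i : Fin n) : elemV x ≠ idxV i := by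
  intro h
  have hx := x.isLt
  have := congrArg Fin.val h
  simp only [elemV, idxV] at this
  omega

def edgeOf (x i : Fin n) : Sym2 (Fin (2 * n)) := s(elemV x, idxV i)

lemma edgeOf_inj {x i x' i' : Fin n} (h : edgeOf x i = edgeOf x' i') : x = x' ∧ i = i' := by
  have hx := x.isLt; have hx' := x'.isLt
  rcases Sym2.eq_iff.mp h with ⟨h1, h2⟩ | ⟨h1, h2⟩
  · simp only [elemV, idxV, Fin.ext_iff] at h1 h2
    exact ⟨Fin.ext (by omega), Fin.ext (by omega)⟩
  · exact absurd h1 (elemV_ne_idxV x i')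

abbrev updF {V : Type*} [DecidableEq V] : Finset (Sym2 V) → Sym2 V × Bool → Finset (Sym2 V) :=
  fun E e => if e.2 then insert e.1 E else E.erase e.1

lemma foldl_true {V : Type*} [DecidableEq V] (L : List (Sym2 V × Bool))
    (hL : ∀ p ∈ L, p.2 = true) (E0 : Finset (Sym2 V)) (e : Sym2 V) :
    e ∈ L.foldl updF E0 ↔ e ∈ E0 ∨ ∃ p ∈ L, p.1 = e := by
  induction L generalizing E0 with
  | nil => simp
  | cons a L ih =>
    obtain ⟨e0, b⟩ := a
    have hb : b = true := hL (e0, b) List.mem_cons_self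
    subst hb
    have h1 : updF E0 (e0, true) = insert e0 E0 := rfl
    simp only [List.foldl_cons, h1]
    rw [ih (fun p hp => hL p (List.mem_cons_of_mem _ hp))]
    simp only [Finset.mem_insert, List.mem_cons]
    constructor
    · rintro ((rfl | h) | ⟨p, hp, rfl⟩)
      · exact Or.inr ⟨(e, true), Or.inl rfl, rfl⟩
      · exact Or.inl h
      · exact Or.inr ⟨p, Or.inr hp, rfl⟩
    · rintro (h | ⟨p, rfl | hp, rfl⟩)
      · exact Or.inl (Or.inr h)
      · exact Or.inl (Or.inl rfl)
      · exact Or.inr ⟨p, hp, rfl⟩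

lemma foldl_false {V : Type*} [DecidableEq V] (L : List (Sym2 V × Bool))
    (hL : ∀ p ∈ L, p.2 = false) (E0 : Finset (Sym2 V)) (e : Sym2 V) :
    e ∈ L.foldl updF E0 ↔ e ∈ E0 ∧ ∀ p ∈ L, p.1 ≠ e := by
  induction L generalizing E0 with
  | nil => simp
  | cons a L ih =>
    obtain ⟨e0, b⟩ := a
    have hb : b = false := hL (e0, b) List.mem_cons_self
    subst hb
    have h1 : updF E0 (e0, false) = E0.erase e0 := rfl
    simp only [List.foldl_cons, h1]
    rw [ih (fun p hp => hL p (List.mem_cons_of_mem _ hp))]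
    simp only [Finset.mem_erase, List.mem_cons]
    constructor
    · rintro ⟨⟨hne, he⟩, h2⟩
      refine ⟨he, fun p hp => ?_⟩
      rcases hp with rfl | hp
      · exact hne ∘ Eq.symm
      · exact h2 p hp
    · rintro ⟨he, h2⟩
      exact ⟨⟨fun h => h2 (e0, false) (Or.inl rfl) h.symm, he⟩, fun p hp => h2 p (Or.inr hp)⟩

noncomputable def aliceL (S : Fin n → Finset (Fin n)) : List (Sym2 (Fin (2 * n)) × Bool) :=
  (List.finRange n).flatMap fun i => (S i).toList.map fun x => (edgeOf x i, true)

noncomputable def bobL (T : Fin n → Finset (Fin n)) : List (Sym2 (Fin (2 * n)) × Bool) :=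
  (List.finRange n).flatMap fun i => (T i).toList.map fun x => (edgeOf x i, false)

lemma mem_aliceL {S : Fin n → Finset (Fin n)} {p} :
    p ∈ aliceL S ↔ ∃ i x, x ∈ S i ∧ p = (edgeOf x i, true) := by
  simp [aliceL, List.mem_flatMap, List.mem_map, eq_comm]

lemma mem_bobL {T : Fin n → Finset (Fin n)} {p} :
    p ∈ bobL T ↔ ∃ i x, x ∈ T i ∧ p = (edgeOf x i, false) := by
  simp [bobL, List.mem_flatMap, List.mem_map, eq_comm]

lemma mem_final (S T : Fin n → Finset (Fin n)) (hST : ∀ i, T i ⊆ S i)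
    (e : Sym2 (Fin (2 * n))) :
    e ∈ (aliceL S ++ bobL T).foldl updF ∅ ↔ ∃ i x, x ∈ S i \ T i ∧ e = edgeOf x i := by
  rw [List.foldl_append,
    foldl_false _ (fun p hp => by rcases mem_bobL.mp hp with ⟨i, x, _, rfl⟩; rfl),
    foldl_true _ (fun p hp => by rcases mem_aliceL.mp hp with ⟨i, x, _, rfl⟩; rfl)]
  simp only [Finset.notMem_empty, false_or]
  constructor
  · rintro ⟨⟨p, hp, rfl⟩, h2⟩
    rcases mem_aliceL.mp hp with ⟨i, x, hx, rfl⟩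
    refine ⟨i, x, Finset.mem_sdiff.mpr ⟨hx, fun hxT => ?_⟩, rfl⟩
    exact h2 (edgeOf x i, false) (mem_bobL.mpr ⟨i, x, hxT, rfl⟩) rfl
  · rintro ⟨i, x, hx, rfl⟩
    rw [Finset.mem_sdiff] at hx
    refine ⟨⟨(edgeOf x i, true), mem_aliceL.mpr ⟨i, x, hx.1, rfl⟩, rfl⟩, ?_⟩
    rintro p hp he
    rcases mem_bobL.mp hp with ⟨i', x', hx', rfl⟩
    obtain ⟨rfl, rfl⟩ := edgeOf_inj he
    exact hx.2 hx'

end URred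


namespace URred

variable {n : ℕ}

lemma idxV_inj {i i' : Fin n} (h : idxV i = idxV i') : i = i' := by
  have := congrArg Fin.val h
  simp only [idxV] at this
  exact Fin.ext (by omega)

lemma elemV_inj {x x' : Fin n} (h : elemV x = elemV x') : x = x' := by
  have := congrArg Fin.val h
  simp only [elemV] at this
  exact Fin.ext this

lemma adj_iff (S T : Fin n → Finset (Fin n)) (hST : ∀ i, T i ⊆ S i) (i : Fin n) (y : Fin (2 * n)) :
    (graphOfUpdates (aliceL S ++ bobL T)).Adj (idxV i) y ↔
      ∃ x, y = elemV x ∧ x ∈ S i \ T i := by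
  rw [graphOfUpdates, SimpleGraph.fromEdgeSet_adj, Finset.mem_coe]
  rw [show (fun (E : Finset (Sym2 (Fin (2*n)))) (e : Sym2 (Fin (2*n)) × Bool) =>
      if e.2 then insert e.1 E else E.erase e.1) = updF from rfl]
  rw [mem_final S T hST]
  constructor
  · rintro ⟨⟨i', x', hx', he⟩, _⟩
    rcases Sym2.eq_iff.mp he with ⟨h1, h2⟩ | ⟨h1, h2⟩
    · exact absurd h1.symm (elemV_ne_idxV x' i)
    · obtain rfl := idxV_inj h1
      exact ⟨x', h2, hx'⟩
  · rintro ⟨x, rfl, hx⟩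
    exact ⟨⟨i, x, hx, Sym2.eq_swap⟩, (elemV_ne_idxV x i).symm⟩

lemma exists_adj_of_reachable {V : Type*} {F : SimpleGraph V} {u v : V}
    (h : F.Reachable u v) (hne : u ≠ v) : ∃ w, F.Adj u w := by
  obtain ⟨p⟩ := h
  cases p with
  | nil => exact absurd rfl hne
  | cons h _ => exact ⟨_, h⟩

end URred


open URred

/-- If a Monte Carlo fully dynamic spanning forest data structure on `2n`-node graphs uses
`C` bits of memory (state space of size at most `2^C`) and, on every update sequence,
answers a spanning-forest query correctly with probability `1 − δ` over its random seed,
then there is a one-way communication protocol for `n`-fold `UR⊂` over universe `[n]`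
using `C` bits of communication (the message lies in `Fin (2^C)`) with success probability
`1 − δ`: for all inputs `S_i ⊋ T_i`, with probability `1 − δ` Bob outputs, for every `i`,
an element of `S_i ∖ T_i`. -/
theorem dynamic_spanning_forest_to_nfold_UR (n C : ℕ) (hn : 1 ≤ n) (δ : ℝ)
    (Seed : Type) [Fintype Seed] (q : Seed → ℝ) (hq0 : ∀ s, 0 ≤ q s) (hq1 : ∑ s, q s = 1)
    (State : Type) [Fintype State] (hcard : Fintype.card State ≤ 2 ^ C)
    (init : Seed → State)
    (upd : Seed → State → Sym2 (Fin (2 * n)) × Bool → State)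
    (query : Seed → State → SimpleGraph (Fin (2 * n)))
    (hcorrect : ∀ l : List (Sym2 (Fin (2 * n)) × Bool),
      1 - δ ≤ ∑ s ∈ Finset.univ.filter
          (fun s =>
            IsSpanningForest (graphOfUpdates l) (query s (l.foldl (upd s) (init s)))), q s) :
    ∃ (msg : (Fin n → Finset (Fin n)) → Seed → Fin (2 ^ C))
      (out : Fin (2 ^ C) → (Fin n → Finset (Fin n)) → Seed → Fin n → Fin n),
      ∀ S T : Fin n → Finset (Fin n), (∀ i, T i ⊂ S i) →
        1 - δ ≤ ∑ s ∈ Finset.univ.filter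
            (fun s => ∀ i, out (msg S s) T s i ∈ S i \ T i), q s := by
  haveI : Nonempty Seed := by
    rcases isEmpty_or_nonempty Seed with h | h
    · rw [Finset.univ_eq_empty, Finset.sum_empty] at hq1
      exact absurd hq1.symm one_ne_zero
    · exact h
  haveI : Nonempty State := ⟨init (Classical.arbitrary Seed)⟩
  obtain ⟨emb⟩ : Nonempty (State ↪ Fin (2 ^ C)) := by
    apply Function.Embedding.nonempty_of_card_le
    simpa using hcard
  set dec : Fin (2 ^ C) → State := Function.invFun emb with hdec
  have hdecemb : ∀ st, dec (emb st) = st := Function.leftInverse_invFun emb.injective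
  refine ⟨fun S s => emb ((aliceL S).foldl (upd s) (init s)),
    fun m T s i =>
      if h : ∃ x : Fin n, (query s ((bobL T).foldl (upd s) (dec m))).Adj (idxV i) (elemV x)
      then h.choose else ⟨0, hn⟩,
    fun S T hST => ?_⟩
  refine le_trans (hcorrect (aliceL S ++ bobL T)) ?_
  apply Finset.sum_le_sum_of_subset_of_nonneg
  · intro s hs
    simp only [Finset.mem_filter] at hs ⊢
    obtain ⟨hsu, hs⟩ := hs
    refine ⟨hsu, fun i => ?_⟩
    have hfold : (aliceL S ++ bobL T).foldl (upd s) (init s)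
        = (bobL T).foldl (upd s) (dec (emb ((aliceL S).foldl (upd s) (init s)))) := by
      rw [hdecemb, List.foldl_append]
    set F := query s ((aliceL S ++ bobL T).foldl (upd s) (init s)) with hF
    obtain ⟨hle, _, hreach⟩ := hs
    -- existence of a forest-neighbor which is an elemV
    obtain ⟨x0, hx0⟩ := Finset.exists_of_ssubset (hST i)
    have hx0' : x0 ∈ S i \ T i := Finset.mem_sdiff.mpr ⟨hx0.1, hx0.2⟩
    have hGadj : (graphOfUpdates (aliceL S ++ bobL T)).Adj (idxV i) (elemV x0) :=
      (adj_iff S T (fun j => (hST j).1) i (elemV x0)).mpr ⟨x0, rfl, hx0'⟩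
    have hFreach : F.Reachable (idxV i) (elemV x0) := hreach _ _ hGadj.reachable
    obtain ⟨w, hw⟩ := exists_adj_of_reachable hFreach (Ne.symm (elemV_ne_idxV x0 i))
    have hwG := hle hw
    obtain ⟨x1, rfl, _⟩ := (adj_iff S T (fun j => (hST j).1) i w).mp hwG
    have hex : ∃ x : Fin n,
        (query s ((bobL T).foldl (upd s)
          (dec (emb ((aliceL S).foldl (upd s) (init s)))))).Adj (idxV i) (elemV x) := by
      rw [← hfold, ← hF]
      exact ⟨x1, hw⟩
    rw [dif_pos hex]
    have hle' : query s ((bobL T).foldl (upd s)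
          (dec (emb ((aliceL S).foldl (upd s) (init s)))))
        ≤ graphOfUpdates (aliceL S ++ bobL T) := by
      rw [← hfold, ← hF]; exact hle
    obtain ⟨x2, hx2, hx2'⟩ :=
      (adj_iff S T (fun j => (hST j).1) i _).mp (hle' hex.choose_spec)
    rwa [elemV_inj hx2]
  · intro s _ _
    exact hq0 s
end
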